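/- arXiv:2308.09491 — 4 statements merged into one kernel-verified Lean document; each statement's English description precedes it below -/
import Mathlib

section
/- Let G be a matching covered graph and C a tight cut of G. An edge e of G is removable in G if and only if e is removable in each C-contraction of G that contains e. -/
open Classical in
/-- A finite multigraph: loops are forbidden, multiple edges are allowed. -/
structure Multigraph where
  V : Type
  E : Type
  [fintV : Fintype V]
  [fintE : Fintype E]
  ends : E → Sym2 V
  no_loops : ∀ e, ¬ (ends e).IsDiag

attribute [instance] Multigraph.fintV Multigraph.fintE

namespace Multigraph

variable (G : Multigraph)

/-- Vertex `v` is incident with edge `e`. -/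
def Inc (v : G.V) (e : G.E) : Prop := v ∈ G.ends e

/-- Adjacency of vertices. -/
def Adj (u v : G.V) : Prop := u ≠ v ∧ ∃ e, G.ends e = s(u, v)

/-- A multigraph is connected. -/
def Connected : Prop := Nonempty G.V ∧ ∀ u v : G.V, Relation.ReflTransGen G.Adj u v

/-- A set of edges is a perfect matching: every vertex is covered exactly once. -/
def IsPerfectMatching (M : Set G.E) : Prop :=
  ∀ v : G.V, ∃! e, e ∈ M ∧ G.Inc v e

/-- Matching covered: nontrivial, connected, every edge lies in a perfect matching. -/
def MatchingCovered : Prop :=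
  2 ≤ Nat.card G.V ∧ G.Connected ∧ ∀ e : G.E, ∃ M, G.IsPerfectMatching M ∧ e ∈ M

/-- Degree of a vertex. -/
noncomputable def degree (v : G.V) : ℕ := Nat.card {e : G.E // G.Inc v e}

/-- Maximum degree `Δ(G)`. -/
noncomputable def maxDegree : ℕ := Finset.univ.sup G.degree

/-- The graph obtained by deleting the edge `e`. -/
noncomputable def deleteEdge (e : G.E) : Multigraph where
  V := G.V
  E := {f : G.E // f ≠ e}
  fintE := Fintype.ofFinite _
  ends f := G.ends f.1
  no_loops f := G.no_loops f.1

/-- An edge of `G` is removable if `G - e` is matching covered. -/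
noncomputable def Removable (e : G.E) : Prop := (G.deleteEdge e).MatchingCovered

/-- The graph obtained by deleting a set of vertices (and all incident edges). -/
noncomputable def deleteVerts (S : Set G.V) : Multigraph where
  V := {v : G.V // v ∉ S}
  E := {e : G.E // ∀ v ∈ G.ends e, v ∉ S}
  fintV := Fintype.ofFinite _
  fintE := Fintype.ofFinite _
  ends e := (G.ends e.1).attachWith e.2
  no_loops e h := G.no_loops e.1 (by
    have := (Sym2.isDiag_map Subtype.val_injective).mpr h
    simpa using this)

/-- Two-connectedness: at least three vertices, and deleting any vertex
leaves a connected graph. -/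
noncomputable def TwoConnected : Prop :=
  3 ≤ Nat.card G.V ∧ ∀ v : G.V, (G.deleteVerts {v}).Connected

/-- Three-connectedness: at least four vertices, and deleting any two distinct
vertices leaves a connected graph. -/
noncomputable def ThreeConnected : Prop :=
  4 ≤ Nat.card G.V ∧ ∀ u v : G.V, u ≠ v → (G.deleteVerts {u, v}).Connected

/-- The cut `∂(X)`: edges with exactly one end in `X`. -/
def cut (X : Set G.V) : Set G.E :=
  {e | ∃ u ∈ X, ∃ w ∈ Xᶜ, G.ends e = s(u, w)}

/-- A tight cut: a cut (with both shores nonempty) met by every perfect matching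
in exactly one edge. -/
def IsTightCut (X : Set G.V) : Prop :=
  X.Nonempty ∧ Xᶜ.Nonempty ∧
    ∀ M : Set G.E, G.IsPerfectMatching M → ∃! e, e ∈ M ∧ e ∈ G.cut X

/-- A cut `∂(X)` is trivial if one of its shores is a singleton. -/
def TrivialShore (X : Set G.V) : Prop := (∃ v, X = {v}) ∨ (∃ v, Xᶜ = {v})

/-- `G` is bipartite. -/
def Bipartite : Prop :=
  ∃ c : G.V → Bool, ∀ (e : G.E) (a b : G.V), G.ends e = s(a, b) → c a ≠ c b

/-- The subgraph of `G` induced by `X` is bipartite. -/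
def BipartiteOn (X : Set G.V) : Prop :=
  ∃ c : G.V → Bool, ∀ (e : G.E) (a b : G.V),
    G.ends e = s(a, b) → a ∈ X → b ∈ X → c a ≠ c b

lemma Sym2.exists_eq_mk {α : Type*} (z : Sym2 α) : ∃ a b, z = s(a, b) := by
  induction z using Sym2.ind with
  | _ x y => exact ⟨x, y, rfl⟩

open Classical in
/-- Contraction `G/X`: the shore `X` is shrunk to a single new vertex.
Edges with both ends in `X` disappear. -/
noncomputable def contract (X : Set G.V) : Multigraph where
  V := {v : G.V // v ∉ X} ⊕ Unit
  E := {e : G.E // ¬ ∀ v ∈ G.ends e, v ∈ X}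
  fintV := Fintype.ofFinite _
  fintE := Fintype.ofFinite _
  ends e := (G.ends e.1).map
    (fun v => if h : v ∈ X then Sum.inr () else Sum.inl ⟨v, h⟩)
  no_loops := by
    rintro ⟨e, he⟩ hdiag
    obtain ⟨a, b, hab⟩ := Sym2.exists_eq_mk (G.ends e)
    have hne : a ≠ b := by
      have := G.no_loops e
      rw [hab, Sym2.mk_isDiag_iff] at this
      exact this
    simp only [hab, Sym2.map_pair_eq, Sym2.mk_isDiag_iff] at hdiag
    by_cases ha : a ∈ X <;> by_cases hb : b ∈ X
    · exact he (by
        rw [hab]; intro v hv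
        rcases Sym2.mem_iff.mp hv with h | h <;> subst h <;> assumption)
    · rw [dif_pos ha, dif_neg hb] at hdiag; simp at hdiag
    · rw [dif_neg ha, dif_pos hb] at hdiag; simp at hdiag
    · rw [dif_neg ha, dif_neg hb] at hdiag
      simp only [Sum.inl.injEq, Subtype.mk.injEq] at hdiag
      exact hne hdiag

/-- A brick: a nonbipartite matching covered graph all of whose tight cuts are
trivial. -/
def IsBrick : Prop :=
  G.MatchingCovered ∧ ¬ G.Bipartite ∧ ∀ X : Set G.V, G.IsTightCut X → G.TrivialShore X

/-- A brace: a bipartite matching covered graph all of whose tight cuts are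
trivial. -/
def IsBrace : Prop :=
  G.MatchingCovered ∧ G.Bipartite ∧ ∀ X : Set G.V, G.IsTightCut X → G.TrivialShore X

/-- `BrickCount G n` holds if some tight cut decomposition of `G` produces
exactly `n` bricks.  (By Lovász's theorem the number `n` is independent of the
decomposition.) -/
inductive BrickCount : (G : Multigraph) → ℕ → Prop
  | brick (G : Multigraph) (h : G.IsBrick) : BrickCount G 1
  | brace (G : Multigraph) (h : G.IsBrace) : BrickCount G 0
  | cut (G : Multigraph) (X : Set G.V) (ht : G.IsTightCut X) (hnt : ¬ G.TrivialShore X)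
      {n m : ℕ} (h1 : BrickCount (G.contract X) n) (h2 : BrickCount (G.contract Xᶜ) m) :
      BrickCount G (n + m)

/-- A near-brick: a matching covered graph whose tight cut decompositions
have exactly one brick. -/
def IsNearBrick : Prop := G.MatchingCovered ∧ BrickCount G 1

/-- A single ear of length at least 3: an odd path of length `k ≥ 3` all of whose
internal vertices have degree two. -/
def HasLongSingleEar : Prop :=
  ∃ (k : ℕ) (v : Fin (k + 1) → G.V) (e : Fin k → G.E),
    Odd k ∧ 3 ≤ k ∧ Function.Injective v ∧ Function.Injective e ∧
    (∀ i : Fin k, G.ends (e i) = s(v i.castSucc, v i.succ)) ∧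
    (∀ i : Fin (k + 1), i ≠ 0 → i ≠ Fin.last k → G.degree (v i) = 2)

/-- Irreducible: no single ear of length three or more. -/
def Irreducible : Prop := ¬ G.HasLongSingleEar

/-- Isomorphism of multigraphs. -/
def IsIso (G H : Multigraph) : Prop :=
  ∃ (φ : G.V ≃ H.V) (ψ : G.E ≃ H.E), ∀ e, H.ends (ψ e) = (G.ends e).map φ

end Multigraph

open Multigraph

/-- The complete graph `K₂`. -/
def K2 : Multigraph where
  V := Fin 2
  E := Unit
  ends _ := s(0, 1)
  no_loops _ := by simp [Sym2.mk_isDiag_iff]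

/-- The complete graph `K₄`. -/
noncomputable def K4 : Multigraph where
  V := Fin 4
  E := {p : Sym2 (Fin 4) // ¬ p.IsDiag}
  fintE := Fintype.ofFinite _
  ends p := p.1
  no_loops p := p.2

/-- The cycle `C₄`. -/
def C4 : Multigraph where
  V := ZMod 4
  E := ZMod 4
  ends i := s(i, i + 1)
  no_loops i := by
    have h : ∀ j : ZMod 4, j ≠ j + 1 := by decide
    simpa [Sym2.mk_isDiag_iff] using h i

/-- `C̄₆`, the complement of the 6-cycle (the triangular prism). -/
noncomputable def C6bar : Multigraph where
  V := ZMod 6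
  E := {p : Sym2 (ZMod 6) // ¬ p.IsDiag ∧ ∀ a b : ZMod 6, p = s(a, b) → b ≠ a + 1 ∧ a ≠ b + 1}
  fintE := Fintype.ofFinite _
  ends p := p.1
  no_loops p := p.2.1

section Aux

open Classical

namespace Multigraph

variable {G : Multigraph}

lemma sym2_eq_of_mem {α : Type*} {z : Sym2 α} {a b : α} (ha : a ∈ z) (hb : b ∈ z)
    (hab : a ≠ b) : z = s(a, b) := by
  induction z using Sym2.ind with
  | _ x y =>
    rcases Sym2.mem_iff.mp ha with h | h <;> rcases Sym2.mem_iff.mp hb with h' | h' <;>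
      subst h <;> first
      | (subst h'; first | exact absurd rfl hab | rfl | exact Sym2.eq_swap)

lemma adj_symm {u v : G.V} (h : G.Adj u v) : G.Adj v u := by
  obtain ⟨hne, f, hf⟩ := h
  exact ⟨hne.symm, f, hf.trans Sym2.eq_swap⟩

lemma ends_nonempty (f : G.E) : ∃ a, a ∈ G.ends f := by
  obtain ⟨a, b, h⟩ := Sym2.exists_eq_mk (G.ends f)
  exact ⟨a, by rw [h]; exact Sym2.mem_mk_left a b⟩

/-- The projection map to the vertex set of a contraction. -/
noncomputable def phi (G : Multigraph) (X : Set G.V) : G.V → (G.contract X).V :=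
  fun v => if h : v ∈ X then Sum.inr () else Sum.inl ⟨v, h⟩

lemma contract_ends (X : Set G.V) (f : (G.contract X).E) :
    (G.contract X).ends f = (G.ends f.1).map (G.phi X) := rfl

lemma phi_eq_inl {X : Set G.V} {v : G.V} (hv : v ∉ X) : G.phi X v = Sum.inl ⟨v, hv⟩ := by
  exact dif_neg hv

lemma phi_eq_inr {X : Set G.V} {v : G.V} (hv : v ∈ X) : G.phi X v = Sum.inr () := by
  exact dif_pos hv

lemma phi_inl_iff {X : Set G.V} {u v : G.V} {hv : v ∉ X} :
    G.phi X u = Sum.inl ⟨v, hv⟩ ↔ u = v := by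
  constructor
  · intro h
    by_cases hu : u ∈ X
    · rw [phi_eq_inr hu] at h; exact absurd h (by simp)
    · rw [phi_eq_inl hu] at h
      simpa using congrArg (fun w => Sum.elim (fun x => (x : {v : G.V // v ∉ X}).1) (fun _ => u) w) h
  · rintro rfl; exact phi_eq_inl hv

lemma phi_inr_iff {X : Set G.V} {u : G.V} : G.phi X u = Sum.inr () ↔ u ∈ X := by
  constructor
  · intro h
    by_cases hu : u ∈ X
    · exact hu
    · rw [phi_eq_inl hu] at h; exact absurd h (by simp)
  · exact phi_eq_inr

lemma inc_inl_iff {X : Set G.V} {v : G.V} {hv : v ∉ X} {f : (G.contract X).E} :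
    (G.contract X).Inc (Sum.inl ⟨v, hv⟩) f ↔ G.Inc v f.1 := by
  unfold Inc
  refine (Sym2.mem_map (f := G.phi X) (z := G.ends f.1)).trans ?_
  constructor
  · rintro ⟨u, hu, hphi⟩
    rwa [(phi_inl_iff).mp hphi] at hu
  · intro h
    exact ⟨v, h, phi_eq_inl hv⟩

lemma inc_inr_iff {X : Set G.V} {f : (G.contract X).E} :
    (G.contract X).Inc (Sum.inr ()) f ↔ ∃ u ∈ G.ends f.1, u ∈ X := by
  unfold Inc
  refine (Sym2.mem_map (f := G.phi X) (z := G.ends f.1)).trans ?_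
  constructor
  · rintro ⟨u, hu, hphi⟩
    exact ⟨u, hu, phi_inr_iff.mp hphi⟩
  · rintro ⟨u, hu, hX⟩
    exact ⟨u, hu, phi_eq_inr hX⟩

lemma mem_cut_of {X : Set G.V} {f : G.E} {u w : G.V} (hu : u ∈ G.ends f) (hu' : u ∈ X)
    (hw : w ∈ G.ends f) (hw' : w ∉ X) : f ∈ G.cut X := by
  have hne : u ≠ w := fun h => hw' (h ▸ hu')
  exact ⟨u, hu', w, hw', sym2_eq_of_mem hu hw hne⟩

lemma cut_edge_of_contract {X : Set G.V} (f : (G.contract X).E)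
    (h : ∃ u ∈ G.ends f.1, u ∈ X) : f.1 ∈ G.cut X := by
  obtain ⟨u, hu, huX⟩ := h
  obtain ⟨w, hw, hwX⟩ := not_forall₂.mp f.2
  exact mem_cut_of hu huX hw hwX

lemma cut_compl (X : Set G.V) : G.cut Xᶜ = G.cut X := by
  ext f
  constructor
  · rintro ⟨u, hu, w, hw, h⟩
    exact ⟨w, by simpa using hw, u, hu, h.trans Sym2.eq_swap⟩
  · rintro ⟨u, hu, w, hw, h⟩
    exact ⟨w, hw, u, by simpa using hu, h.trans Sym2.eq_swap⟩

lemma tight_compl {X : Set G.V} (ht : G.IsTightCut X) : G.IsTightCut Xᶜ := by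
  refine ⟨ht.2.1, by simpa using ht.1, fun M hM => ?_⟩
  rw [cut_compl]
  exact ht.2.2 M hM

end Multigraph

end Aux
section Aux2

open Classical

namespace Multigraph

variable {G : Multigraph}

lemma pm_delete_of_pm {e : G.E} {M : Set G.E} (hM : G.IsPerfectMatching M) (he : e ∉ M) :
    (G.deleteEdge e).IsPerfectMatching {f | f.1 ∈ M} := by
  intro v
  obtain ⟨f, ⟨hfM, hfv⟩, huniq⟩ := hM v
  have hfe : f ≠ e := fun h => he (h ▸ hfM)
  refine ⟨⟨f, hfe⟩, ⟨hfM, hfv⟩, ?_⟩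
  rintro ⟨g, hge⟩ ⟨hgM, hgv⟩
  exact Subtype.ext (huniq g ⟨hgM, hgv⟩)

lemma pm_of_pm_delete {e : G.E} {M : Set (G.deleteEdge e).E}
    (hM : (G.deleteEdge e).IsPerfectMatching M) :
    G.IsPerfectMatching (Subtype.val '' M) ∧ e ∉ Subtype.val '' M := by
  constructor
  · intro v
    obtain ⟨f, ⟨hfM, hfv⟩, huniq⟩ := hM v
    refine ⟨f.1, ⟨⟨f, hfM, rfl⟩, hfv⟩, ?_⟩
    rintro g ⟨⟨g', hg'M, rfl⟩, hgv⟩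
    exact congrArg Subtype.val (huniq g' ⟨hg'M, hgv⟩)
  · rintro ⟨f, _, hfe⟩
    exact f.2 hfe

lemma pm_contract_restrict {X : Set G.V} (ht : G.IsTightCut X) {M : Set G.E}
    (hM : G.IsPerfectMatching M) :
    (G.contract X).IsPerfectMatching {f | f.1 ∈ M} := by
  rintro (⟨v, hv⟩ | ⟨⟩)
  · obtain ⟨f, ⟨hfM, hfv⟩, huniq⟩ := hM v
    have hfE : ¬ ∀ u ∈ G.ends f, u ∈ X := fun h => hv (h v hfv)
    refine ⟨⟨f, hfE⟩, ⟨hfM, inc_inl_iff.mpr hfv⟩, ?_⟩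
    rintro ⟨g, hgE⟩ ⟨hgM, hgv⟩
    exact Subtype.ext (huniq g ⟨hgM, inc_inl_iff.mp hgv⟩)
  · obtain ⟨g, ⟨hgM, hgc⟩, huniq⟩ := ht.2.2 M hM
    obtain ⟨u, huX, w, hwX, hends⟩ := hgc
    have hgE : ¬ ∀ u ∈ G.ends g, u ∈ X := by
      intro h
      exact hwX (h w (by rw [hends]; exact Sym2.mem_mk_right u w))
    refine ⟨⟨g, hgE⟩, ⟨hgM, inc_inr_iff.mpr ⟨u, by rw [hends]; exact Sym2.mem_mk_left u w, huX⟩⟩, ?_⟩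
    rintro ⟨f, hfE⟩ ⟨hfM, hfv⟩
    have : f ∈ G.cut X := cut_edge_of_contract ⟨f, hfE⟩ (inc_inr_iff.mp hfv)
    exact Subtype.ext (huniq f ⟨hfM, this⟩)

lemma pm_contract_cutedge {X : Set G.V} {M : Set (G.contract X).E}
    (hM : (G.contract X).IsPerfectMatching M) :
    ∃ g ∈ M, g.1 ∈ G.cut X ∧ ∀ g' ∈ M, (∃ u ∈ G.ends g'.1, u ∈ X) → g' = g := by
  obtain ⟨g, ⟨hgM, hgInc⟩, huniq⟩ := hM (Sum.inr ())
  refine ⟨g, hgM, cut_edge_of_contract g (inc_inr_iff.mp hgInc), ?_⟩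
  intro g' hg'M h
  exact huniq g' ⟨hg'M, inc_inr_iff.mpr h⟩

end Multigraph

end Aux2
section Aux3

open Classical

namespace Multigraph

variable {G : Multigraph}

lemma glue_aux {X Y : Set G.V} (hY : Y = Xᶜ) {M1 : Set (G.contract X).E}
    {M2 : Set (G.contract Y).E} (hM1 : (G.contract X).IsPerfectMatching M1)
    (hM2 : (G.contract Y).IsPerfectMatching M2) {g : G.E} (hgcut : g ∈ G.cut X)
    (hg1 : g ∈ Subtype.val '' M1) (hg2 : g ∈ Subtype.val '' M2)
    {v : G.V} (hv : v ∉ X) :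
    ∃! f, f ∈ (Subtype.val '' M1 ∪ Subtype.val '' M2) ∧ G.Inc v f := by
  subst hY
  obtain ⟨f₁, ⟨hf₁M, hf₁Inc⟩, huniq₁⟩ := hM1 (Sum.inl ⟨v, hv⟩)
  obtain ⟨r, ⟨hrM, hrInc⟩, huniqr⟩ := hM2 (Sum.inr ())
  refine ⟨f₁.1, ⟨Or.inl ⟨f₁, hf₁M, rfl⟩, inc_inl_iff.mp hf₁Inc⟩, ?_⟩
  rintro h ⟨(⟨h1, hh1M, rfl⟩ | ⟨h2, hh2M, rfl⟩), hInc⟩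
  · exact congrArg Subtype.val (huniq₁ h1 ⟨hh1M, inc_inl_iff.mpr hInc⟩)
  · -- h2 is an edge of contract Xᶜ incident with v ∈ Xᶜ, hence the inr-edge of M2
    have hvc : v ∈ Xᶜ := hv
    have h2r : h2 = r := huniqr h2 ⟨hh2M, inc_inr_iff.mpr ⟨v, hInc, hvc⟩⟩
    -- also g is the inr-edge of M2
    obtain ⟨g2, hg2M, hg2val⟩ := hg2
    obtain ⟨u, huX, w, hwX, hends⟩ := hgcut
    have hg2r : g2 = r := by
      refine huniqr g2 ⟨hg2M, inc_inr_iff.mpr ⟨w, ?_, hwX⟩⟩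
      rw [hg2val, hends]; exact Sym2.mem_mk_right u w
    have hval : h2.1 = g := by rw [h2r, ← hg2r, hg2val]
    -- so v is an end of g; g is also in M1, incident with inl v there
    obtain ⟨g1, hg1M, hg1val⟩ := hg1
    have hvg : G.Inc v g1.1 := by rw [hg1val, ← hval]; exact hInc
    have : g1 = f₁ := huniq₁ g1 ⟨hg1M, inc_inl_iff.mpr hvg⟩
    rw [hval, ← hg1val, this]

lemma glue {X Y : Set G.V} (hY : Y = Xᶜ) {M1 : Set (G.contract X).E}
    {M2 : Set (G.contract Y).E} (hM1 : (G.contract X).IsPerfectMatching M1)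
    (hM2 : (G.contract Y).IsPerfectMatching M2) {g : G.E} (hgcut : g ∈ G.cut X)
    (hg1 : g ∈ Subtype.val '' M1) (hg2 : g ∈ Subtype.val '' M2) :
    G.IsPerfectMatching (Subtype.val '' M1 ∪ Subtype.val '' M2) := by
  intro v
  by_cases hv : v ∈ X
  · have hX : X = Yᶜ := by rw [hY, compl_compl]
    have hgcut' : g ∈ G.cut Y := by rw [hY, cut_compl]; exact hgcut
    have hv' : v ∉ Y := by rw [hY]; simpa using hv
    rw [Set.union_comm]
    exact glue_aux hX hM2 hM1 hgcut' hg2 hg1 hv'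
  · exact glue_aux hY hM1 hM2 hgcut hg1 hg2 hv

end Multigraph

end Aux3
section Aux4

open Classical

namespace Multigraph

variable {G : Multigraph}

lemma phi_ne {X : Set G.V} {b c : G.V} (hne : b ≠ c) (h : ¬(b ∈ X ∧ c ∈ X)) :
    G.phi X b ≠ G.phi X c := by
  by_cases hb : b ∈ X <;> by_cases hc : c ∈ X
  · exact absurd ⟨hb, hc⟩ h
  · rw [phi_eq_inr hb, phi_eq_inl hc]; exact Sum.inr_ne_inl
  · rw [phi_eq_inl hb, phi_eq_inr hc]; exact Sum.inl_ne_inr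
  · rw [phi_eq_inl hb, phi_eq_inl hc]
    intro hh
    injection hh with h'
    exact hne (congrArg Subtype.val h')

lemma connected_contract {X : Set G.V} (hX : X.Nonempty) (h : G.Connected) :
    (G.contract X).Connected := by
  obtain ⟨x₀, hx₀⟩ := hX
  have push : ∀ u v : G.V, Relation.ReflTransGen G.Adj u v →
      Relation.ReflTransGen (G.contract X).Adj (G.phi X u) (G.phi X v) := by
    intro u v hpath
    induction hpath with
    | refl => exact .refl
    | @tail b c _ hadj ih =>
      obtain ⟨hne, f, hf⟩ := hadj
      by_cases hfE : ∀ w ∈ G.ends f, w ∈ X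
      · have hb : b ∈ X := hfE b (by rw [hf]; exact Sym2.mem_mk_left _ _)
        have hc : c ∈ X := hfE c (by rw [hf]; exact Sym2.mem_mk_right _ _)
        rw [phi_eq_inr hc]; rwa [phi_eq_inr hb] at ih
      · refine ih.tail ⟨phi_ne hne (fun hbc => hfE (fun w hw => ?_)), ⟨f, hfE⟩, ?_⟩
        · rw [hf, Sym2.mem_iff] at hw
          rcases hw with rfl | rfl
          exacts [hbc.1, hbc.2]
        · show Sym2.map (G.phi X) (G.ends f) = _
          rw [hf, Sym2.map_pair_eq]
  refine ⟨⟨Sum.inr ()⟩, fun w1 w2 => ?_⟩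
  let l : (G.contract X).V → G.V := fun w => match w with
    | .inl v => v.1
    | .inr _ => x₀
  have hl : ∀ w, G.phi X (l w) = w := by
    rintro (⟨v, hv⟩ | ⟨⟩)
    · exact phi_eq_inl hv
    · exact phi_eq_inr hx₀
  have := push (l w1) (l w2) (h.2 _ _)
  rwa [hl, hl] at this

lemma connected_contract_delete {X : Set G.V} (hX : X.Nonempty) {e : G.E}
    {he : ¬ ∀ v ∈ G.ends e, v ∈ X} (h : (G.deleteEdge e).Connected) :
    ((G.contract X).deleteEdge ⟨e, he⟩).Connected := by
  obtain ⟨x₀, hx₀⟩ := hX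
  have push : ∀ u v : G.V, Relation.ReflTransGen (G.deleteEdge e).Adj u v →
      Relation.ReflTransGen ((G.contract X).deleteEdge ⟨e, he⟩).Adj (G.phi X u) (G.phi X v) := by
    intro u v hpath
    induction hpath with
    | refl => exact .refl
    | @tail b c _ hadj ih =>
      obtain ⟨hne, f, hf⟩ := hadj
      have hf' : G.ends f.1 = s(b, c) := hf
      by_cases hfE : ∀ w ∈ G.ends f.1, w ∈ X
      · have hb : b ∈ X := hfE b (by rw [hf']; exact Sym2.mem_mk_left _ _)
        have hc : c ∈ X := hfE c (by rw [hf']; exact Sym2.mem_mk_right _ _)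
        rw [phi_eq_inr hc]; rwa [phi_eq_inr hb] at ih
      · have hne2 : (⟨f.1, hfE⟩ : (G.contract X).E) ≠ ⟨e, he⟩ :=
          fun hh => f.2 (congrArg Subtype.val hh)
        refine ih.tail ⟨phi_ne hne (fun hbc => hfE (fun w hw => ?_)), ⟨⟨f.1, hfE⟩, hne2⟩, ?_⟩
        · rw [hf', Sym2.mem_iff] at hw
          rcases hw with rfl | rfl
          exacts [hbc.1, hbc.2]
        · show Sym2.map (G.phi X) (G.ends f.1) = _
          rw [hf', Sym2.map_pair_eq]
          rfl
  refine ⟨⟨Sum.inr ()⟩, fun w1 w2 => ?_⟩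
  let l : (G.contract X).V → G.V := fun w => match w with
    | .inl v => v.1
    | .inr _ => x₀
  have hl : ∀ w, G.phi X (l w) = w := by
    rintro (⟨v, hv⟩ | ⟨⟩)
    · exact phi_eq_inl hv
    · exact phi_eq_inr hx₀
  have := push (l w1) (l w2) (h.2 _ _)
  rw [hl w1, hl w2] at this; exact this

lemma two_le_card_contract {X : Set G.V} (hXc : Xᶜ.Nonempty) :
    2 ≤ Nat.card (G.contract X).V := by
  obtain ⟨w, hw⟩ := hXc
  have : Nontrivial (G.contract X).V := ⟨⟨Sum.inl ⟨w, hw⟩, Sum.inr (), Sum.inl_ne_inr⟩⟩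
  rw [Nat.card_eq_fintype_card]
  exact Fintype.one_lt_card_iff_nontrivial.mpr this

lemma mc_contract {X : Set G.V} (hG : G.MatchingCovered) (ht : G.IsTightCut X) :
    (G.contract X).MatchingCovered := by
  refine ⟨two_le_card_contract ht.2.1, connected_contract ht.1 hG.2.1, fun f => ?_⟩
  obtain ⟨M, hM, hfM⟩ := hG.2.2 f.1
  exact ⟨{g | g.1 ∈ M}, pm_contract_restrict ht hM, hfM⟩

/-- Forward direction: removable in `G` implies removable in the contraction. -/
lemma removable_contract {X : Set G.V} (ht : G.IsTightCut X) {e : G.E}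
    (hrem : G.Removable e) (he : ¬ ∀ v ∈ G.ends e, v ∈ X) :
    (G.contract X).Removable ⟨e, he⟩ := by
  refine ⟨two_le_card_contract ht.2.1, connected_contract_delete ht.1 hrem.2.1, ?_⟩
  rintro ⟨⟨f, hfE⟩, hfe⟩
  have hfne : f ≠ e := fun hh => hfe (Subtype.ext hh)
  obtain ⟨Md, hMd, hfMd⟩ := hrem.2.2 ⟨f, hfne⟩
  obtain ⟨hMpm, heM⟩ := pm_of_pm_delete hMd
  have hM' := pm_contract_restrict ht hMpm
  refine ⟨{g | g.1.1 ∈ Subtype.val '' Md}, ?_, ⟨⟨f, hfne⟩, hfMd, rfl⟩⟩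
  have := pm_delete_of_pm (e := (⟨e, he⟩ : (G.contract X).E)) hM' (fun h => heM h)
  exact this

end Multigraph

end Aux4
section Aux5

open Classical

namespace Multigraph

variable {G : Multigraph}

lemma even_card_of_invol {α : Type*} (i : α → α) :
    ∀ (n : ℕ) (s : Finset α), s.card = n → (∀ a ∈ s, i a ∈ s) →
      (∀ a ∈ s, i (i a) = a) → (∀ a ∈ s, i a ≠ a) → Even s.card := by
  intro n
  induction n using Nat.strong_induction_on with
  | _ n ih =>
    intro s hsn hmem hinv hne
    subst hsn
    rcases s.eq_empty_or_nonempty with rfl | ⟨a, ha⟩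
    · simp
    · have hia := hmem a ha
      have hnea := hne a ha
      have hsub : {a, i a} ⊆ s :=
        Finset.insert_subset_iff.mpr ⟨ha, Finset.singleton_subset_iff.mpr hia⟩
      have hcard2 : ({a, i a} : Finset α).card = 2 := Finset.card_pair (Ne.symm hnea)
      set t := s \ {a, i a} with hts
      have hcardt : t.card = s.card - 2 := by rw [hts, Finset.card_sdiff_of_subset hsub, hcard2]
      have h2s : 2 ≤ s.card := by rw [← hcard2]; exact Finset.card_le_card hsub
      have hlt : t.card < s.card := by omega
      have hmem' : ∀ b ∈ t, i b ∈ t := by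
        intro b hb
        obtain ⟨hb1, hb2⟩ := Finset.mem_sdiff.mp hb
        refine Finset.mem_sdiff.mpr ⟨hmem b hb1, ?_⟩
        simp only [Finset.mem_insert, Finset.mem_singleton] at hb2 ⊢
        push_neg at hb2 ⊢
        refine ⟨fun h => hb2.2 (by rw [← hinv b hb1, h]), fun h => hb2.1 ?_⟩
        have := congrArg i h
        rwa [hinv b hb1, hinv a ha] at this
      have hinv' : ∀ b ∈ t, i (i b) = b := fun b hb => hinv b (Finset.mem_sdiff.mp hb).1
      have hne' : ∀ b ∈ t, i b ≠ b := fun b hb => hne b (Finset.mem_sdiff.mp hb).1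
      have hte := ih t.card hlt t rfl hmem' hinv' hne'
      rw [Nat.even_iff] at hte ⊢
      omega

lemma pm_partner {M : Set G.E} (hM : G.IsPerfectMatching M) (v : G.V) :
    ∃ (f : G.E) (w : G.V), f ∈ M ∧ G.ends f = s(v, w) ∧ v ≠ w ∧
      (∀ g ∈ M, G.Inc v g → g = f) ∧ (∀ g ∈ M, G.Inc w g → g = f) := by
  obtain ⟨f, ⟨hfM, hfv⟩, huniq⟩ := hM v
  have hv : v ∈ G.ends f := hfv
  set w := Sym2.Mem.other hv with hwdef
  have hsp : s(v, w) = G.ends f := Sym2.other_spec hv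
  have hne : v ≠ w := by
    intro h
    apply G.no_loops f
    rw [← hsp, ← h]
    exact Sym2.mk_isDiag_iff.mpr rfl
  obtain ⟨f', ⟨hf'M, hf'w⟩, huniq'⟩ := hM w
  have hfw : G.Inc w f := by
    show w ∈ G.ends f
    rw [← hsp]; exact Sym2.mem_mk_right _ _
  have hff' : f = f' := (huniq' f ⟨hfM, hfw⟩).symm ▸ rfl
  refine ⟨f, w, hfM, hsp.symm, hne, fun g hg hgv => huniq g ⟨hg, hgv⟩, fun g hg hgw => ?_⟩
  rw [huniq' g ⟨hg, hgw⟩, ← huniq' f ⟨hfM, hfw⟩]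

/-- The partner of a vertex in a perfect matching. -/
noncomputable def pmOther {M : Set G.E} (hM : G.IsPerfectMatching M) (v : G.V) : G.V :=
  (pm_partner hM v).choose_spec.choose

lemma pmOther_spec {M : Set G.E} (hM : G.IsPerfectMatching M) (v : G.V) :
    ∃ f : G.E, f ∈ M ∧ G.ends f = s(v, pmOther hM v) ∧ v ≠ pmOther hM v ∧
      (∀ g ∈ M, G.Inc v g → g = f) ∧ (∀ g ∈ M, G.Inc (pmOther hM v) g → g = f) := by
  obtain ⟨h1, h2, h3, h4, h5⟩ := (pm_partner hM v).choose_spec.choose_spec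
  exact ⟨(pm_partner hM v).choose, h1, h2, h3, h4, h5⟩

lemma pmOther_ne {M : Set G.E} (hM : G.IsPerfectMatching M) (v : G.V) :
    pmOther hM v ≠ v := ((pmOther_spec hM v).choose_spec.2.2.1).symm

lemma pmOther_invol {M : Set G.E} (hM : G.IsPerfectMatching M) (v : G.V) :
    pmOther hM (pmOther hM v) = v := by
  obtain ⟨f, hfM, hends, hne, _, huw⟩ := pmOther_spec hM v
  set w := pmOther hM v
  obtain ⟨f', hf'M, hends', hne', hu', _⟩ := pmOther_spec hM w
  have hwf : G.Inc w f := by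
    show w ∈ G.ends f
    rw [hends]; exact Sym2.mem_mk_right _ _
  have : f' = f := by
    have h1 := huw f' hf'M (by show w ∈ G.ends f'; rw [hends']; exact Sym2.mem_mk_left _ _)
    exact h1
  rw [this] at hends'
  rw [hends] at hends'
  rcases Sym2.eq_iff.mp hends' with ⟨h1, h2⟩ | ⟨h1, h2⟩
  · exact absurd h2 hne'
  · exact h1.symm

end Multigraph

end Aux5
section Aux6

open Classical

namespace Multigraph

variable {G : Multigraph}

lemma rtg_symm {H : Multigraph} {u v : H.V} (h : Relation.ReflTransGen H.Adj u v) :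
    Relation.ReflTransGen H.Adj v u := by
  induction h with
  | refl => exact .refl
  | tail _ hadj ih => exact Relation.ReflTransGen.trans (.single (adj_symm hadj)) ih

lemma connected_delete_of_pm (hG : G.MatchingCovered) {e : G.E}
    (hex : ∃ M, G.IsPerfectMatching M ∧ e ∉ M) : (G.deleteEdge e).Connected := by
  obtain ⟨M, hMpm, heM⟩ := hex
  obtain ⟨N, hNpm, heN⟩ := hG.2.2 e
  have hVne : Nonempty G.V := by
    have h := hG.1
    rw [Nat.card_eq_fintype_card] at h
    exact Fintype.card_pos_iff.mp (by omega)
  obtain ⟨a, b, hab⟩ := Sym2.exists_eq_mk (G.ends e)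
  have hane : a ≠ b := by
    intro h
    exact G.no_loops e (by rw [hab, h]; exact Sym2.mk_isDiag_iff.mpr rfl)
  have key : Relation.ReflTransGen (G.deleteEdge e).Adj a b := by
    by_contra hkey
    set A : Set G.V := {v | Relation.ReflTransGen (G.deleteEdge e).Adj a v} with hA
    have haA : a ∈ A := Relation.ReflTransGen.refl
    have hbA : b ∉ A := hkey
    have hstep : ∀ v ∈ A, ∀ (f : G.E), f ≠ e → ∀ w, G.ends f = s(v, w) → v ≠ w → w ∈ A := by
      intro v hv f hfe w hfw hneq
      exact Relation.ReflTransGen.tail hv ⟨hneq, ⟨f, hfe⟩, hfw⟩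
    set A' : Finset G.V := Finset.univ.filter (fun v => v ∈ A) with hA'
    have hmemA' : ∀ v, v ∈ A' ↔ v ∈ A := by intro v; simp [hA']
    have hMeven : Even A'.card := by
      apply even_card_of_invol (pmOther hMpm) A'.card A' rfl ?_ ?_ ?_
      · intro v hv
        obtain ⟨f, hfM, hends, hne, _, _⟩ := pmOther_spec hMpm v
        have hfe : f ≠ e := fun h => heM (h ▸ hfM)
        exact (hmemA' _).mpr (hstep v ((hmemA' _).mp hv) f hfe _ hends hne)
      · intro v _; exact pmOther_invol hMpm v
      · intro v _; exact pmOther_ne hMpm v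
    have haA' : a ∈ A' := (hmemA' _).mpr haA
    have hNeven : Even (A'.erase a).card := by
      apply even_card_of_invol (pmOther hNpm) (A'.erase a).card _ rfl ?_ ?_ ?_
      · intro v hv
        obtain ⟨hva, hvA'⟩ := Finset.mem_erase.mp hv
        have hvA := (hmemA' _).mp hvA'
        obtain ⟨f, hfN, hends, hne, huniqv, huniqw⟩ := pmOther_spec hNpm v
        have hvb : v ≠ b := fun h => hbA (h ▸ hvA)
        have hfe : f ≠ e := by
          intro h
          subst h
          have hv' : v ∈ G.ends f := by rw [hends]; exact Sym2.mem_mk_left _ _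
          rw [hab] at hv'
          rcases Sym2.mem_iff.mp hv' with h | h
          exacts [hva h, hvb h]
        have hwA : pmOther hNpm v ∈ A := hstep v hvA f hfe _ hends hne
        refine Finset.mem_erase.mpr ⟨?_, (hmemA' _).mpr hwA⟩
        intro h
        have hInca : G.Inc a e := by show a ∈ G.ends e; rw [hab]; exact Sym2.mem_mk_left _ _
        have := huniqw e heN (by rw [h]; exact hInca)
        exact hfe this.symm
      · intro v _; exact pmOther_invol hNpm v
      · intro v _; exact pmOther_ne hNpm v
    have hcard : (A'.erase a).card = A'.card - 1 := Finset.card_erase_of_mem haA'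
    have hpos : 0 < A'.card := Finset.card_pos.mpr ⟨a, haA'⟩
    rw [Nat.even_iff] at hMeven hNeven
    omega
  refine ⟨hVne, fun u v => ?_⟩
  have hpath := hG.2.1.2 u v
  induction hpath with
  | refl => exact .refl
  | @tail p q _ hadj ih =>
    obtain ⟨hne, f, hf⟩ := hadj
    by_cases hfe : f = e
    · subst hfe
      have heq : s(a, b) = s(p, q) := hab.symm.trans hf
      rcases Sym2.eq_iff.mp heq with ⟨h1, h2⟩ | ⟨h1, h2⟩
      · exact ih.trans (h1 ▸ h2 ▸ key)
      · exact ih.trans (h2 ▸ h1 ▸ rtg_symm key)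
    · exact ih.tail ⟨hne, ⟨f, hfe⟩, hf⟩

end Multigraph

end Aux6
section Aux7

open Classical

namespace Multigraph

variable {G : Multigraph}

lemma exists_pm_avoiding {X Y : Set G.V} (hY : Y = Xᶜ) (hG : G.MatchingCovered)
    (htX : G.IsTightCut X) {e f : G.E} (hfe : f ≠ e)
    (hf : ¬ ∀ v ∈ G.ends f, v ∈ X)
    (hrem1 : ∀ he : ¬ ∀ v ∈ G.ends e, v ∈ X, (G.contract X).Removable ⟨e, he⟩)
    (hrem2 : ∀ he : ¬ ∀ v ∈ G.ends e, v ∈ Y, (G.contract Y).Removable ⟨e, he⟩) :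
    ∃ M, G.IsPerfectMatching M ∧ f ∈ M ∧ e ∉ M := by
  subst hY
  have htXc := tight_compl htX
  obtain ⟨M2, hM2pm, hfM2, heM2⟩ :
      ∃ M2 : Set (G.contract X).E, (G.contract X).IsPerfectMatching M2 ∧
        (⟨f, hf⟩ : (G.contract X).E) ∈ M2 ∧ ∀ g ∈ M2, (g : (G.contract X).E).1 ≠ e := by
    by_cases heX : ∀ v ∈ G.ends e, v ∈ X
    · obtain ⟨M2, hM2pm, hfM2⟩ := (mc_contract hG htX).2.2 ⟨f, hf⟩
      exact ⟨M2, hM2pm, hfM2, fun g _ hg => g.2 (by rw [hg]; exact heX)⟩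
    · have hrm := hrem1 heX
      have hne : (⟨f, hf⟩ : (G.contract X).E) ≠ ⟨e, heX⟩ :=
        fun h => hfe (congrArg Subtype.val h)
      obtain ⟨Md, hMd, hfMd⟩ := hrm.2.2 ⟨⟨f, hf⟩, hne⟩
      obtain ⟨hpm, hemem⟩ := pm_of_pm_delete hMd
      refine ⟨_, hpm, ⟨⟨⟨f, hf⟩, hne⟩, hfMd, rfl⟩, ?_⟩
      intro g hg hge
      have : g = (⟨e, heX⟩ : (G.contract X).E) := Subtype.ext hge
      exact hemem (this ▸ hg)
  obtain ⟨g2, hg2M, hg2cut, _⟩ := pm_contract_cutedge hM2pm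
  set g := g2.1 with hgdef
  have hge : g ≠ e := heM2 g2 hg2M
  obtain ⟨u, huX, w, hwX, hends⟩ := hg2cut
  have hgE : ¬ ∀ v ∈ G.ends g, v ∈ Xᶜ := by
    intro h
    exact (h u (by rw [hends]; exact Sym2.mem_mk_left _ _)) huX
  obtain ⟨M1, hM1pm, hgM1, heM1⟩ :
      ∃ M1 : Set (G.contract Xᶜ).E, (G.contract Xᶜ).IsPerfectMatching M1 ∧
        (⟨g, hgE⟩ : (G.contract Xᶜ).E) ∈ M1 ∧ ∀ g' ∈ M1, (g' : (G.contract Xᶜ).E).1 ≠ e := by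
    by_cases heY : ∀ v ∈ G.ends e, v ∈ Xᶜ
    · obtain ⟨M1, hM1pm, hgM1⟩ := (mc_contract hG htXc).2.2 ⟨g, hgE⟩
      exact ⟨M1, hM1pm, hgM1, fun g' _ hg' => g'.2 (by rw [hg']; exact heY)⟩
    · have hrm := hrem2 heY
      have hne : (⟨g, hgE⟩ : (G.contract Xᶜ).E) ≠ ⟨e, heY⟩ :=
        fun h => hge (congrArg Subtype.val h)
      obtain ⟨Md, hMd, hgMd⟩ := hrm.2.2 ⟨⟨g, hgE⟩, hne⟩
      obtain ⟨hpm, hemem⟩ := pm_of_pm_delete hMd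
      refine ⟨_, hpm, ⟨⟨⟨g, hgE⟩, hne⟩, hgMd, rfl⟩, ?_⟩
      intro g' hg' hg'e
      have : g' = (⟨e, heY⟩ : (G.contract Xᶜ).E) := Subtype.ext hg'e
      exact hemem (this ▸ hg')
  have hgcut : g ∈ G.cut X := ⟨u, huX, w, hwX, hends⟩
  have hpm := glue rfl hM2pm hM1pm hgcut ⟨g2, hg2M, rfl⟩ ⟨⟨g, hgE⟩, hgM1, rfl⟩
  refine ⟨_, hpm, Or.inl ⟨⟨f, hf⟩, hfM2, rfl⟩, ?_⟩
  rintro (⟨h1, hh1, h1e⟩ | ⟨h2, hh2, h2e⟩)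
  · exact heM2 h1 hh1 h1e
  · exact heM1 h2 hh2 h2e

end Multigraph

end Aux7
/-- An edge `e` of a matching covered graph `G` is removable iff it is removable
in each `C`-contraction of `G` that contains it, for a tight cut `C = ∂(X)`. -/
theorem removable_iff_removable_in_tight_cut_contractions
    (G : Multigraph) (hG : G.MatchingCovered) (X : Set G.V) (ht : G.IsTightCut X)
    (e : G.E) :
    G.Removable e ↔
      ((∀ he : ¬ ∀ v ∈ G.ends e, v ∈ X, (G.contract X).Removable ⟨e, he⟩) ∧
       (∀ he : ¬ ∀ v ∈ G.ends e, v ∈ Xᶜ, (G.contract Xᶜ).Removable ⟨e, he⟩)) := by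
  constructor
  · intro hrem
    exact ⟨fun he => Multigraph.removable_contract ht hrem he,
      fun he => Multigraph.removable_contract (Multigraph.tight_compl ht) hrem he⟩
  · rintro ⟨hrem1, hrem2⟩
    have star : ∀ f : G.E, f ≠ e → ∃ M, G.IsPerfectMatching M ∧ f ∈ M ∧ e ∉ M := by
      intro f hfe
      by_cases hfX : ∀ v ∈ G.ends f, v ∈ X
      · have hfXc : ¬ ∀ v ∈ G.ends f, v ∈ Xᶜ := by
          intro h
          obtain ⟨a, ha⟩ := Multigraph.ends_nonempty f
          exact (h a ha) (hfX a ha)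
        have hY : X = Xᶜᶜ := (compl_compl X).symm
        exact Multigraph.exists_pm_avoiding hY hG (Multigraph.tight_compl ht) hfe hfXc
          hrem2 hrem1
      · exact Multigraph.exists_pm_avoiding rfl hG ht hfe hfX hrem1 hrem2
    refine ⟨hG.1, ?_, ?_⟩
    · by_cases hE : ∃ f : G.E, f ≠ e
      · obtain ⟨f, hfe⟩ := hE
        obtain ⟨M, hM, _, heM⟩ := star f hfe
        exact Multigraph.connected_delete_of_pm hG ⟨M, hM, heM⟩
      · exfalso
        push_neg at hE
        obtain ⟨x₀, hx₀⟩ := ht.1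
        obtain ⟨y₀, hy₀⟩ := ht.2.1
        have hcross : ∃ u ∈ X, ∃ w ∈ Xᶜ, G.Adj u w := by
          have hpath := hG.2.1.2 x₀ y₀
          have hind : ∀ v, Relation.ReflTransGen G.Adj x₀ v → v ∈ Xᶜ →
              ∃ u ∈ X, ∃ w ∈ Xᶜ, G.Adj u w := by
            intro v hv
            induction hv with
            | refl => intro hc; exact absurd hx₀ hc
            | @tail p q _ hadj ih =>
              intro hq
              by_cases hp : p ∈ X
              · exact ⟨p, hp, q, hq, hadj⟩
              · exact ih hp
          exact hind y₀ hpath hy₀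
        obtain ⟨u, huX, w, hwX, hne', fc, hfc⟩ := hcross
        have hEnds : G.ends e = s(u, w) := by rw [← hE fc]; exact hfc
        have heX : ¬ ∀ v ∈ G.ends e, v ∈ X := by
          intro h
          exact hwX (h w (by rw [hEnds]; exact Sym2.mem_mk_right _ _))
        have hrm := hrem1 heX
        have hwnX : w ∉ X := hwX
        have hconn := hrm.2.1.2 (Sum.inl ⟨w, hwnX⟩) (Sum.inr ())
        rcases Relation.ReflTransGen.cases_head hconn with h | ⟨c, hadj, _⟩
        · simp at h
        · obtain ⟨_, fd, _⟩ := hadj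
          exact fd.2 (Subtype.ext (hE fd.1.1))
    · rintro ⟨f, hfe⟩
      obtain ⟨M, hM, hfM, heM⟩ := star f hfe
      exact ⟨{g | g.1 ∈ M}, Multigraph.pm_delete_of_pm hM heM, hfM⟩
end

section
/- Let G be a graph and H a bisubdivision of G at an edge e (H is obtained by replacing e by an odd path of length at least 3). If H is matching covered, then G is matching covered. -/
open Multigraph

namespace Multigraph

/-- Data witnessing that `H` is a bisubdivision of `G` at the edge `e = uv`:
`H` is obtained from `G` by replacing `e` by an odd path `p 0, p 1, …, p k`
(`k ≥ 3` odd) from `u` to `v` whose internal vertices are new vertices of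
degree two in `H`; the other vertices and edges of `G` are carried over by the
injections `φ` and `ψ`. -/
structure BisubWitness (H G : Multigraph) (e : G.E) where
  u : G.V
  v : G.V
  k : ℕ
  φ : G.V → H.V
  ψ : {f : G.E // f ≠ e} → H.E
  p : Fin (k + 1) → H.V
  q : Fin k → H.E
  ends_e : G.ends e = s(u, v)
  odd : Odd k
  len : 3 ≤ k
  φ_inj : Function.Injective φ
  ψ_inj : Function.Injective ψ
  p_inj : Function.Injective p
  q_inj : Function.Injective q
  ψ_ends : ∀ f, H.ends (ψ f) = (G.ends f.1).map φ
  p_first : p 0 = φ u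
  p_last : p (Fin.last k) = φ v
  q_ends : ∀ i : Fin k, H.ends (q i) = s(p i.castSucc, p i.succ)
  internal_new : ∀ i : Fin (k + 1), i ≠ 0 → i ≠ Fin.last k → p i ∉ Set.range φ
  internal_deg : ∀ i : Fin (k + 1), i ≠ 0 → i ≠ Fin.last k → H.degree (p i) = 2
  v_cover : Set.range φ ∪ Set.range p = Set.univ
  e_cover : Set.range ψ ∪ Set.range q = Set.univ
  ψq_disj : ∀ f i, ψ f ≠ q i

/-- `H` is a bisubdivision of `G` at the edge `e`. -/
def IsBisubdivisionAt (H G : Multigraph) (e : G.E) : Prop :=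
  Nonempty (BisubWitness H G e)

end Multigraph

namespace Multigraph.BisubWitness

variable {G H : Multigraph} {e : G.E} (W : BisubWitness H G e)

lemma kpos : 0 < W.k := by have := W.len; omega

lemma uv_ne : W.u ≠ W.v := by
  have h := G.no_loops e
  rw [W.ends_e, Sym2.mk_isDiag_iff] at h
  exact h

lemma mem_map_iff (f : G.E) (x : G.V) :
    W.φ x ∈ (G.ends f).map W.φ ↔ x ∈ G.ends f := by
  constructor
  · intro h
    obtain ⟨b, hb, hbx⟩ := Sym2.mem_map.mp h
    rwa [W.φ_inj hbx] at hb
  · intro h; exact Sym2.mem_map.mpr ⟨x, h, rfl⟩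

lemma edge_cases (g : H.E) : (∃ f, g = W.ψ f) ∨ (∃ i, g = W.q i) := by
  have hg : g ∈ Set.range W.ψ ∪ Set.range W.q := W.e_cover ▸ Set.mem_univ g
  rcases hg with ⟨f, hf⟩ | ⟨i, hi⟩
  · exact Or.inl ⟨f, hf.symm⟩
  · exact Or.inr ⟨i, hi.symm⟩

/-- Classification of edges incident with an internal path vertex. -/
lemma inc_internal (g : H.E) (j : ℕ) (h0 : 0 < j) (hk : j < W.k)
    (hinc : H.Inc (W.p ⟨j, by omega⟩) g) :
    g = W.q ⟨j - 1, by omega⟩ ∨ g = W.q ⟨j, hk⟩ := by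
  rcases W.edge_cases g with ⟨f, rfl⟩ | ⟨i, rfl⟩
  · exfalso
    have hm : W.p ⟨j, by omega⟩ ∈ (G.ends f.1).map W.φ := by
      rw [← W.ψ_ends]; exact hinc
    obtain ⟨b, _, hbx⟩ := Sym2.mem_map.mp hm
    exact W.internal_new ⟨j, by omega⟩ (by simp [Fin.ext_iff]; omega)
      (by simp [Fin.ext_iff, Fin.last]; omega) ⟨b, hbx⟩
  · have hm : W.p ⟨j, by omega⟩ ∈ s(W.p i.castSucc, W.p i.succ) := by
      rw [← W.q_ends]; exact hinc
    rcases Sym2.mem_iff.mp hm with h | h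
    · right
      have : (⟨j, by omega⟩ : Fin (W.k+1)) = i.castSucc := W.p_inj h
      have hv : j = i.val := by
        have := congrArg Fin.val this; simpa using this
      congr 1; exact Fin.ext (show (i : ℕ) = j from hv.symm)
    · left
      have : (⟨j, by omega⟩ : Fin (W.k+1)) = i.succ := W.p_inj h
      have hv : j = i.val + 1 := by
        have := congrArg Fin.val this; simpa using this
      congr 1; exact Fin.ext (show (i : ℕ) = j - 1 by omega)

/-- Classification of edges incident with an image vertex `φ x`. -/
lemma inc_phi (g : H.E) (x : G.V) (hinc : H.Inc (W.φ x) g) :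
    (∃ f, g = W.ψ f ∧ x ∈ G.ends f.1) ∨
    (x = W.u ∧ g = W.q ⟨0, W.kpos⟩) ∨
    (x = W.v ∧ g = W.q ⟨W.k - 1, by have := W.kpos; omega⟩) := by
  rcases W.edge_cases g with ⟨f, rfl⟩ | ⟨i, rfl⟩
  · left
    refine ⟨f, rfl, ?_⟩
    have hm : W.φ x ∈ (G.ends f.1).map W.φ := by rw [← W.ψ_ends]; exact hinc
    exact (W.mem_map_iff f.1 x).mp hm
  · have hm : W.φ x ∈ s(W.p i.castSucc, W.p i.succ) := by
      rw [← W.q_ends]; exact hinc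
    rcases Sym2.mem_iff.mp hm with h | h
    · by_cases hi0 : i.castSucc = 0
      · right; left
        have hx : W.φ x = W.φ W.u := by rw [h, hi0, W.p_first]
        refine ⟨W.φ_inj hx, ?_⟩
        congr 1
        have := congrArg Fin.val hi0
        simp at this
        exact Fin.ext this
      · exfalso
        exact W.internal_new i.castSucc hi0 (Fin.castSucc_lt_last i).ne
          (by rw [← h]; exact ⟨x, rfl⟩)
    · by_cases hil : i.succ = Fin.last W.k
      · right; right
        have hx : W.φ x = W.φ W.v := by rw [h, hil, W.p_last]
        refine ⟨W.φ_inj hx, ?_⟩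
        congr 1
        have := congrArg Fin.val hil
        simp [Fin.last] at this
        exact Fin.ext (show (i : ℕ) = W.k - 1 by omega)
      · exfalso
        exact W.internal_new i.succ (Fin.succ_ne_zero i) hil
          (by rw [← h]; exact ⟨x, rfl⟩)

lemma inc_q_self (j : ℕ) (hj : j < W.k) :
    H.Inc (W.p ⟨j, by omega⟩) (W.q ⟨j, hj⟩) := by
  show W.p ⟨j, by omega⟩ ∈ H.ends (W.q ⟨j, hj⟩)
  rw [W.q_ends, Sym2.mem_iff]
  left
  congr 2


lemma inc_q_succ (j : ℕ) (hj : j < W.k) :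
    H.Inc (W.p ⟨j + 1, by omega⟩) (W.q ⟨j, hj⟩) := by
  show W.p ⟨j + 1, by omega⟩ ∈ H.ends (W.q ⟨j, hj⟩)
  rw [W.q_ends, Sym2.mem_iff]
  right
  congr 2


/-- Alternation of the matching along the path. -/
lemma alt (M : Set H.E) (hM : H.IsPerfectMatching M) (j : ℕ) (h0 : 0 < j) (hk : j < W.k) :
    (W.q ⟨j, hk⟩ ∈ M ↔ W.q ⟨j - 1, by omega⟩ ∉ M) := by
  obtain ⟨g, ⟨hgM, hginc⟩, huniq⟩ := hM (W.p ⟨j, by omega⟩)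
  have hqa : H.Inc (W.p ⟨j, by omega⟩) (W.q ⟨j - 1, by omega⟩) := by
    have h1 := W.inc_q_succ (j - 1) (by omega)
    simp only [Nat.sub_add_cancel h0] at h1
    exact h1
  have hqb : H.Inc (W.p ⟨j, by omega⟩) (W.q ⟨j, hk⟩) := W.inc_q_self j hk
  have hne : W.q ⟨j, hk⟩ ≠ W.q ⟨j - 1, by omega⟩ := by
    intro h
    have := congrArg Fin.val (W.q_inj h)
    simp at this; omega
  constructor
  · intro hb ha
    exact hne ((huniq _ ⟨hb, hqb⟩).trans (huniq _ ⟨ha, hqa⟩).symm)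
  · intro ha
    rcases W.inc_internal g j h0 hk hginc with rfl | rfl
    · exact absurd hgM ha
    · exact hgM

lemma alt_even (M : Set H.E) (hM : H.IsPerfectMatching M) (j : ℕ) (hj : j < W.k) :
    (W.q ⟨j, hj⟩ ∈ M ↔ (Even j ↔ W.q ⟨0, W.kpos⟩ ∈ M)) := by
  induction j with
  | zero => simp
  | succ n ih =>
    have h2 := ih (by omega)
    have h3 : Even (n + 1) ↔ ¬ Even n := Nat.even_add_one
    have h : W.q ⟨n + 1, hj⟩ ∈ M ↔ W.q ⟨n, by omega⟩ ∉ M := W.alt M hM (n + 1) (by omega) hj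
    rw [h, h2]
    tauto

lemma q_last_iff (M : Set H.E) (hM : H.IsPerfectMatching M) :
    (W.q ⟨W.k - 1, by have := W.kpos; omega⟩ ∈ M ↔ W.q ⟨0, W.kpos⟩ ∈ M) := by
  obtain ⟨m, hm⟩ := W.odd
  have heven : Even (W.k - 1) := ⟨m, by omega⟩
  rw [W.alt_even M hM (W.k - 1) (by have := W.kpos; omega)]
  tauto

lemma inc_phi_u_q0 : H.Inc (W.φ W.u) (W.q ⟨0, W.kpos⟩) := by
  have h := W.inc_q_self 0 W.kpos
  have h0 : W.p ⟨0, by omega⟩ = W.φ W.u := by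
    rw [← W.p_first]; congr 1
  rwa [h0] at h

lemma inc_phi_v_qlast : H.Inc (W.φ W.v) (W.q ⟨W.k - 1, by have := W.kpos; omega⟩) := by
  have h := W.inc_q_succ (W.k - 1) (by have := W.kpos; omega)
  have h0 : W.p ⟨W.k - 1 + 1, by have := W.kpos; omega⟩ = W.φ W.v := by
    rw [← W.p_last]; congr 1
    exact Fin.ext (show W.k - 1 + 1 = W.k by have := W.kpos; omega)
  rwa [h0] at h

lemma inc_image (f : G.E) (hf : f ≠ e) (x : G.V) (hx : x ∈ G.ends f) :
    H.Inc (W.φ x) (W.ψ ⟨f, hf⟩) := by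
  show W.φ x ∈ H.ends (W.ψ ⟨f, hf⟩)
  rw [W.ψ_ends]
  exact (W.mem_map_iff f x).mpr hx

open Classical in
/-- The pullback of a perfect matching of `H` is a perfect matching of `G`. -/
lemma pullback_pm (M : Set H.E) (hM : H.IsPerfectMatching M) :
    G.IsPerfectMatching
      {g : G.E | if h : g = e then W.q ⟨0, W.kpos⟩ ∈ M else W.ψ ⟨g, h⟩ ∈ M} := by
  classical
  intro x
  set N : Set G.E := {g : G.E | if h : g = e then W.q ⟨0, W.kpos⟩ ∈ M else W.ψ ⟨g, h⟩ ∈ M}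
    with hN
  have hmemN : ∀ (g : G.E) (h : g ≠ e), (g ∈ N ↔ W.ψ ⟨g, h⟩ ∈ M) := by
    intro g h
    simp only [hN, Set.mem_setOf_eq, dif_neg h]
  have hmemNe : e ∈ N ↔ W.q ⟨0, W.kpos⟩ ∈ M := by
    simp only [hN, Set.mem_setOf_eq]
    rw [dif_pos trivial]
  obtain ⟨g0, ⟨hg0M, hg0inc⟩, huniq⟩ := hM (W.φ x)
  -- the generic case: x is matched through a ψ-edge
  have main : ∀ f : {f : G.E // f ≠ e}, g0 = W.ψ f → x ∈ G.ends f.1 →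
      (e ∈ N → G.Inc x e → False) → ∃! g, g ∈ N ∧ G.Inc x g := by
    intro f hg0 hxf hnotE
    refine ⟨f.1, ⟨?_, hxf⟩, ?_⟩
    · rw [hmemN f.1 f.2]
      have : W.ψ ⟨f.1, f.2⟩ = W.ψ f := by congr 1
      rw [this, ← hg0]; exact hg0M
    · rintro g ⟨hgN, hginc⟩
      by_cases hge : g = e
      · exact absurd (hnotE (hge ▸ hgN) (hge ▸ hginc)) not_false
      · have hgM : W.ψ ⟨g, hge⟩ ∈ M := (hmemN g hge).mp hgN
        have hinc : H.Inc (W.φ x) (W.ψ ⟨g, hge⟩) := W.inc_image g hge x hginc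
        have := (huniq _ ⟨hgM, hinc⟩).trans hg0
        have := W.ψ_inj this
        exact congrArg Subtype.val this
  by_cases hq0 : W.q ⟨0, W.kpos⟩ ∈ M
  · -- e is in the pulled-back matching
    by_cases hxu : x = W.u
    · subst hxu
      refine ⟨e, ⟨hmemNe.mpr hq0, ?_⟩, ?_⟩
      · show W.u ∈ G.ends e
        rw [W.ends_e]; exact Sym2.mem_iff.mpr (Or.inl rfl)
      · rintro g ⟨hgN, hginc⟩
        by_cases hge : g = e
        · exact hge
        · exfalso
          have hgM : W.ψ ⟨g, hge⟩ ∈ M := (hmemN g hge).mp hgN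
          have hinc : H.Inc (W.φ W.u) (W.ψ ⟨g, hge⟩) := W.inc_image g hge W.u hginc
          have h1 := huniq _ ⟨hgM, hinc⟩
          have h2 := huniq _ ⟨hq0, W.inc_phi_u_q0⟩
          exact W.ψq_disj ⟨g, hge⟩ _ (h1.trans h2.symm)
    · by_cases hxv : x = W.v
      · subst hxv
        have hqlast := (W.q_last_iff M hM).mpr hq0
        refine ⟨e, ⟨hmemNe.mpr hq0, ?_⟩, ?_⟩
        · show W.v ∈ G.ends e
          rw [W.ends_e]; exact Sym2.mem_iff.mpr (Or.inr rfl)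
        · rintro g ⟨hgN, hginc⟩
          by_cases hge : g = e
          · exact hge
          · exfalso
            have hgM : W.ψ ⟨g, hge⟩ ∈ M := (hmemN g hge).mp hgN
            have hinc : H.Inc (W.φ W.v) (W.ψ ⟨g, hge⟩) := W.inc_image g hge W.v hginc
            have h1 := huniq _ ⟨hgM, hinc⟩
            have h2 := huniq _ ⟨hqlast, W.inc_phi_v_qlast⟩
            exact W.ψq_disj ⟨g, hge⟩ _ (h1.trans h2.symm)
      · -- x is neither u nor v
        rcases W.inc_phi g0 x hg0inc with ⟨f, hg0f, hxf⟩ | ⟨h, _⟩ | ⟨h, _⟩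
        · refine main f hg0f hxf ?_
          intro _ hince
          have : x ∈ s(W.u, W.v) := W.ends_e ▸ hince
          rcases Sym2.mem_iff.mp this with h | h
          exacts [hxu h, hxv h]
        · exact absurd h hxu
        · exact absurd h hxv
  · -- e is not in the pulled-back matching
    have hqlast : W.q ⟨W.k - 1, by have := W.kpos; omega⟩ ∉ M := by
      intro h; exact hq0 ((W.q_last_iff M hM).mp h)
    have hnotE : e ∉ N := fun h => hq0 (hmemNe.mp h)
    rcases W.inc_phi g0 x hg0inc with ⟨f, hg0f, hxf⟩ | ⟨_, hg0q⟩ | ⟨_, hg0q⟩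
    · exact main f hg0f hxf (fun h _ => hnotE h)
    · exact absurd (hg0q ▸ hg0M) hq0
    · exact absurd (hg0q ▸ hg0M) hqlast

end Multigraph.BisubWitness

/-- If `H` is a bisubdivision of `G` at an edge `e` and `H` is matching covered,
then `G` is matching covered. -/
theorem bisubdivision_matching_covered
    (G H : Multigraph) (e : G.E) (hb : Multigraph.IsBisubdivisionAt H G e)
    (hH : H.MatchingCovered) : G.MatchingCovered := by
  classical
  obtain ⟨W⟩ := hb
  obtain ⟨hcard, hconn, hpm⟩ := hH
  refine ⟨?_, ?_, ?_⟩
  · rw [Nat.card_eq_fintype_card]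
    exact Fintype.one_lt_card_iff.mpr ⟨W.u, W.v, W.uv_ne⟩
  · refine ⟨⟨W.u⟩, ?_⟩
    obtain ⟨-, hc⟩ := hconn
    set π : H.V → G.V := fun h => if hx : ∃ x, W.φ x = h then hx.choose else W.u with hπ
    have hπφ : ∀ x, π (W.φ x) = x := by
      intro x
      have hx : ∃ y, W.φ y = W.φ x := ⟨x, rfl⟩
      simp only [hπ, dif_pos hx]
      exact W.φ_inj hx.choose_spec
    have hπp : ∀ i, π (W.p i) = W.u ∨ π (W.p i) = W.v := by
      intro i
      by_cases hi0 : i = 0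
      · left; rw [hi0, W.p_first, hπφ]
      · by_cases hil : i = Fin.last W.k
        · right; rw [hil, W.p_last, hπφ]
        · left
          have hnr := W.internal_new i hi0 hil
          have : ¬ ∃ x, W.φ x = W.p i := fun ⟨x, hx⟩ => hnr ⟨x, hx⟩
          simp only [hπ, dif_neg this]
    have hAdjuv : G.Adj W.u W.v := ⟨W.uv_ne, e, W.ends_e⟩
    have hAdjvu : G.Adj W.v W.u := ⟨W.uv_ne.symm, e, W.ends_e.trans (Sym2.eq_swap)⟩
    have hpp : ∀ i j : Fin (W.k + 1),
        Relation.ReflTransGen G.Adj (π (W.p i)) (π (W.p j)) := by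
      intro i j
      rcases hπp i with h1 | h1 <;> rcases hπp j with h2 | h2 <;> rw [h1, h2] <;>
        first
          | exact .refl
          | exact .single hAdjuv
          | exact .single hAdjvu
    have hadj : ∀ a b, H.Adj a b → Relation.ReflTransGen G.Adj (π a) (π b) := by
      rintro a b ⟨hab, g, hg⟩
      rcases W.edge_cases g with ⟨f, rfl⟩ | ⟨i, rfl⟩
      · rw [W.ψ_ends] at hg
        obtain ⟨x, y, hxy⟩ := Multigraph.Sym2.exists_eq_mk (G.ends f.1)
        rw [hxy, Sym2.map_pair_eq] at hg
        have hxyne : x ≠ y := by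
          have := G.no_loops f.1
          rw [hxy, Sym2.mk_isDiag_iff] at this
          exact this
        have hAdjxy : G.Adj x y := ⟨hxyne, f.1, hxy⟩
        have hAdjyx : G.Adj y x := ⟨hxyne.symm, f.1, hxy.trans Sym2.eq_swap⟩
        rcases Sym2.eq_iff.mp hg with ⟨ha, hb⟩ | ⟨ha, hb⟩
        · rw [← ha, ← hb, hπφ, hπφ]; exact .single hAdjxy
        · rw [← ha, ← hb, hπφ, hπφ]; exact .single hAdjyx
      · rw [W.q_ends] at hg
        rcases Sym2.eq_iff.mp hg with ⟨ha, hb⟩ | ⟨ha, hb⟩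
        · rw [← ha, ← hb]; exact hpp _ _
        · rw [← ha, ← hb]; exact hpp _ _
    have lift : ∀ {a b : H.V}, Relation.ReflTransGen H.Adj a b →
        Relation.ReflTransGen G.Adj (π a) (π b) := by
      intro a b hab
      induction hab with
      | refl => exact .refl
      | tail _ h2 ih => exact ih.trans (hadj _ _ h2)
    intro x y
    have key := lift (hc (W.φ x) (W.φ y))
    rwa [hπφ, hπφ] at key
  · intro f
    by_cases hf : f = e
    · obtain ⟨M, hM, hq0⟩ := hpm (W.q ⟨0, W.kpos⟩)
      refine ⟨_, Multigraph.BisubWitness.pullback_pm W M hM, ?_⟩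
      show (if h : f = e then _ ∈ M else _)
      rw [dif_pos hf]
      exact hq0
    · obtain ⟨M, hM, hψ⟩ := hpm (W.ψ ⟨f, hf⟩)
      refine ⟨_, Multigraph.BisubWitness.pullback_pm W M hM, ?_⟩
      show (if h : f = e then _ else W.ψ ⟨f, h⟩ ∈ M)
      rw [dif_neg hf]
      exact hψ
end

section
/- Let H be a bisubdivision of a graph G at an edge e = uv, obtained by replacing e with an odd path P of length at least 3, and suppose H is matching covered. Let X = V(P) \ {v}. Then ∂_H(X) is a tight cut of H. -/
open Multigraph

/-- If `H` is a bisubdivision of `G` at `e = uv` with subdividing path `P` and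
`H` is matching covered, then `∂_H(V(P) \\ {v})` is a tight cut of `H`. -/
theorem bisubdivision_path_cut_tight
    (G H : Multigraph) (e : G.E) (W : Multigraph.BisubWitness H G e)
    (hH : H.MatchingCovered) :
    H.IsTightCut (Set.range W.p \ {W.p (Fin.last W.k)}) := by
  classical
  set X : Set H.V := Set.range W.p \ {W.p (Fin.last W.k)} with hX
  have hk3 : 3 ≤ W.k := W.len
  have h0last : (0 : Fin (W.k + 1)) ≠ Fin.last W.k := by
    rw [Fin.ne_iff_vne]
    simp only [Fin.val_zero, Fin.val_last]
    omega
  -- membership in X for path vertices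
  have hpX : ∀ j : Fin (W.k + 1), W.p j ∈ X ↔ j ≠ Fin.last W.k := by
    intro j
    constructor
    · rintro ⟨-, hne⟩ h
      exact hne (by rw [h]; rfl)
    · intro hj
      exact ⟨⟨j, rfl⟩, fun h => hj (W.p_inj h)⟩
  -- membership in X for old vertices
  have hφX : ∀ w : G.V, W.φ w ∈ X ↔ w = W.u := by
    intro w
    constructor
    · rintro hw
      obtain ⟨⟨j, hj⟩, hne⟩ := hw
      by_cases hj0 : j = 0
      · subst hj0
        rw [W.p_first] at hj
        exact (W.φ_inj hj).symm
      · by_cases hjl : j = Fin.last W.k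
        · exact absurd (show W.φ w ∈ ({W.p (Fin.last W.k)} : Set H.V) by
            rw [← hj, hjl]; exact rfl) hne
        · exact absurd ⟨w, hj.symm⟩ (W.internal_new j hj0 hjl)
    · rintro rfl
      rw [← W.p_first]
      exact (hpX 0).mpr h0last
  -- incidence of path vertices with path edges
  have hIncq : ∀ (j : Fin (W.k + 1)) (i : Fin W.k),
      H.Inc (W.p j) (W.q i) ↔ j = i.castSucc ∨ j = i.succ := by
    intro j i
    unfold Multigraph.Inc
    rw [W.q_ends, Sym2.mem_iff]
    constructor
    · rintro (h | h)
      · exact Or.inl (W.p_inj h)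
      · exact Or.inr (W.p_inj h)
    · rintro (rfl | rfl)
      · exact Or.inl rfl
      · exact Or.inr rfl
  -- every edge is old or path
  have hedge : ∀ e' : H.E, (∃ f, e' = W.ψ f) ∨ (∃ i, e' = W.q i) := by
    intro e'
    have h : e' ∈ Set.range W.ψ ∪ Set.range W.q := by
      rw [W.e_cover]; trivial
    rcases h with ⟨f, hf⟩ | ⟨i, hi⟩
    · exact Or.inl ⟨f, hf.symm⟩
    · exact Or.inr ⟨i, hi.symm⟩
  -- the last path edge is in the cut
  have hcut_q_mem : W.q ⟨W.k - 1, by omega⟩ ∈ H.cut X := by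
    refine ⟨W.p (Fin.castSucc ⟨W.k - 1, by omega⟩), ?_, W.p (Fin.last W.k), ?_, ?_⟩
    · refine (hpX _).mpr ?_
      rw [Fin.ne_iff_vne]
      simp only [Fin.coe_castSucc, Fin.val_last]
      omega
    · simp only [Set.mem_compl_iff]
      rw [hpX]
      simp
    · rw [W.q_ends]
      have hs : (⟨W.k - 1, by omega⟩ : Fin W.k).succ = Fin.last W.k := by
        rw [Fin.ext_iff]
        simp only [Fin.val_succ, Fin.val_last]
        omega
      rw [hs]
  -- path edges in the cut have index k-1
  have hcut_q : ∀ i : Fin W.k, W.q i ∈ H.cut X → (i : ℕ) = W.k - 1 := by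
    intro i hi
    by_contra hne
    obtain ⟨a, haX, b, hbX, hab⟩ := hi
    rw [W.q_ends] at hab
    have hilt := i.isLt
    have hc : Fin.castSucc i ≠ Fin.last W.k := by
      rw [Fin.ne_iff_vne]
      simp only [Fin.coe_castSucc, Fin.val_last]
      omega
    have hs : Fin.succ i ≠ Fin.last W.k := by
      rw [Fin.ne_iff_vne]
      simp only [Fin.val_succ, Fin.val_last]
      omega
    rcases Sym2.eq_iff.mp hab with ⟨h1, h2⟩ | ⟨h1, h2⟩
    · refine hbX ?_
      rw [← h2]
      exact (hpX _).mpr hs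
    · refine hbX ?_
      rw [← h1]
      exact (hpX _).mpr hc
  -- old edges in the cut are incident with φ u
  have hcut_ψ_inc : ∀ f, W.ψ f ∈ H.cut X → H.Inc (W.φ W.u) (W.ψ f) := by
    intro f hf
    obtain ⟨a, haX, b, hbX, hab⟩ := hf
    have ha : a ∈ H.ends (W.ψ f) := by rw [hab]; exact Sym2.mem_mk_left a b
    rw [W.ψ_ends] at ha
    obtain ⟨w, hw, rfl⟩ := Sym2.mem_map.mp ha
    have hwu : w = W.u := (hφX w).mp haX
    show W.φ W.u ∈ H.ends (W.ψ f)
    rw [W.ψ_ends]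
    exact Sym2.mem_map.mpr ⟨w, hw, by rw [hwu]⟩
  -- old edges incident with φ u are in the cut
  have hcut_ψ_mem : ∀ f, H.Inc (W.φ W.u) (W.ψ f) → W.ψ f ∈ H.cut X := by
    intro f hf
    have hf' : W.φ W.u ∈ (G.ends f.1).map W.φ := by
      rw [← W.ψ_ends]; exact hf
    obtain ⟨w, hw, hww⟩ := Sym2.mem_map.mp hf'
    have hwu : w = W.u := W.φ_inj hww
    rw [hwu] at hw
    clear hww hwu
    obtain ⟨a, b, hab⟩ := Multigraph.Sym2.exists_eq_mk (G.ends f.1)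
    have hgen : ∀ b : G.V, G.ends f.1 = s(W.u, b) → W.ψ f ∈ H.cut X := by
      intro b hb
      have hbu : b ≠ W.u := by
        have hnl := G.no_loops f.1
        rw [hb, Sym2.mk_isDiag_iff] at hnl
        exact fun h => hnl (h ▸ rfl)
      refine ⟨W.φ W.u, (hφX W.u).mpr rfl, W.φ b, ?_, ?_⟩
      · simp only [Set.mem_compl_iff]
        rw [hφX]
        exact hbu
      · rw [W.ψ_ends, hb, Sym2.map_pair_eq]
    rw [hab, Sym2.mem_iff] at hw
    rcases hw with h | h
    · exact hgen b (by rw [hab, ← h])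
    · exact hgen a (by rw [hab, ← h, Sym2.eq_swap])
  refine ⟨⟨W.p 0, (hpX 0).mpr h0last⟩,
    ⟨W.p (Fin.last W.k), by simp only [Set.mem_compl_iff]; rw [hpX]; simp⟩, ?_⟩
  intro M hM
  -- alternation along the path
  have halt : ∀ n : ℕ, (hn : n + 1 < W.k) →
      (W.q ⟨n, by omega⟩ ∈ M ↔ W.q ⟨n + 1, hn⟩ ∉ M) := by
    intro n hn
    set x : Fin (W.k + 1) := ⟨n + 1, by omega⟩ with hxdef
    have hx0 : x ≠ 0 := by
      rw [hxdef, Fin.ne_iff_vne]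
      simp only [Fin.val_zero]
      omega
    have hxl : x ≠ Fin.last W.k := by
      rw [hxdef, Fin.ne_iff_vne]
      simp only [Fin.val_last]
      omega
    obtain ⟨e', ⟨heM, heInc⟩, huniq⟩ := hM (W.p x)
    have hinca : H.Inc (W.p x) (W.q ⟨n, by omega⟩) := by
      rw [hIncq]
      right
      simp [hxdef, Fin.ext_iff]
    have hincb : H.Inc (W.p x) (W.q ⟨n + 1, hn⟩) := by
      rw [hIncq]
      left
      simp [hxdef, Fin.ext_iff]
    rcases hedge e' with ⟨f, rfl⟩ | ⟨i, rfl⟩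
    · exfalso
      have hmem : W.p x ∈ (G.ends f.1).map W.φ := by
        rw [← W.ψ_ends]; exact heInc
      obtain ⟨w, -, hw⟩ := Sym2.mem_map.mp hmem
      exact W.internal_new x hx0 hxl ⟨w, hw⟩
    · have hi : (i : ℕ) = n ∨ (i : ℕ) = n + 1 := by
        rcases (hIncq x i).mp heInc with h | h
        · right
          have h' := Fin.ext_iff.mp h
          simp only [hxdef, Fin.coe_castSucc] at h'
          omega
        · left
          have h' := Fin.ext_iff.mp h
          simp only [hxdef, Fin.val_succ] at h'
          omega
      constructor
      · intro ha hb
        have h1 := huniq _ ⟨ha, hinca⟩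
        have h2 := huniq _ ⟨hb, hincb⟩
        have h3 := W.q_inj (h1.trans h2.symm)
        simp only [Fin.ext_iff] at h3
        omega
      · intro hb
        rcases hi with h | h
        · have hieq : i = ⟨n, by omega⟩ := Fin.ext h
          rwa [hieq] at heM
        · have hieq : i = ⟨n + 1, hn⟩ := Fin.ext h
          rw [hieq] at heM
          exact absurd heM hb
  -- proof-irrelevant version of "the n-th path edge is in M"
  set Qn : ℕ → Prop := fun n => ∃ h : n < W.k, W.q ⟨n, h⟩ ∈ M with hQndef
  have hQiff : ∀ (n : ℕ) (hn : n < W.k), Qn n ↔ W.q ⟨n, hn⟩ ∈ M := by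
    intro n hn
    constructor
    · rintro ⟨h, hm⟩; exact hm
    · intro hm; exact ⟨hn, hm⟩
  clear hQndef
  clear_value Qn
  have halt' : ∀ n : ℕ, n + 1 < W.k → (Qn n ↔ ¬ Qn (n + 1)) := by
    intro n hn
    rw [hQiff n (by omega), hQiff (n + 1) hn]
    exact halt n hn
  have hpar : ∀ n : ℕ, n < W.k → (Qn n ↔ (Qn 0 ↔ Even n)) := by
    intro n
    induction n with
    | zero => intro hn; simp
    | succ n ih =>
      intro hn
      have h1 := ih (by omega)
      have h2 := halt' n hn
      have h3 : Even (n + 1) ↔ ¬ Even n := Nat.even_add_one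
      tauto
  obtain ⟨m, hm⟩ := W.odd
  have hev : Even (W.k - 1) := ⟨m, by omega⟩
  have hql : Qn (W.k - 1) ↔ Qn 0 := by
    rw [hpar (W.k - 1) (by omega)]
    simp [hev]
  have hInc0 : H.Inc (W.φ W.u) (W.q ⟨0, by omega⟩) := by
    rw [← W.p_first, hIncq]
    left
    simp [Fin.ext_iff]
  by_cases h0 : Qn 0
  · -- the last path edge is the unique cut edge of M
    have hq0M : W.q ⟨0, by omega⟩ ∈ M := (hQiff 0 (by omega)).mp h0
    have hqlM : W.q ⟨W.k - 1, by omega⟩ ∈ M :=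
      (hQiff (W.k - 1) (by omega)).mp (hql.mpr h0)
    refine ⟨W.q ⟨W.k - 1, by omega⟩, ⟨hqlM, hcut_q_mem⟩, ?_⟩
    rintro e' ⟨he'M, he'cut⟩
    rcases hedge e' with ⟨f, rfl⟩ | ⟨i, rfl⟩
    · exfalso
      have hinc := hcut_ψ_inc f he'cut
      obtain ⟨e₀, he₀, huniq⟩ := hM (W.φ W.u)
      have h1 := huniq _ ⟨he'M, hinc⟩
      have h2 := huniq _ ⟨hq0M, hInc0⟩
      exact W.ψq_disj f _ (h1.trans h2.symm)
    · exact congrArg W.q (Fin.ext (hcut_q i he'cut))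
  · -- the unique M-edge at φ u is an old edge and the unique cut edge of M
    obtain ⟨e₀, ⟨he₀M, he₀inc⟩, huniq⟩ := hM (W.φ W.u)
    rcases hedge e₀ with ⟨f, rfl⟩ | ⟨i, rfl⟩
    · refine ⟨W.ψ f, ⟨he₀M, hcut_ψ_mem f he₀inc⟩, ?_⟩
      rintro e' ⟨he'M, he'cut⟩
      rcases hedge e' with ⟨f', rfl⟩ | ⟨i, rfl⟩
      · exact huniq _ ⟨he'M, hcut_ψ_inc f' he'cut⟩
      · exfalso
        have hi := hcut_q i he'cut
        have hieq : i = ⟨W.k - 1, by omega⟩ := Fin.ext hi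
        rw [hieq] at he'M
        have : Qn (W.k - 1) := (hQiff (W.k - 1) (by omega)).mpr he'M
        exact h0 (hql.mp this)
    · exfalso
      rw [← W.p_first, hIncq] at he₀inc
      rcases he₀inc with h | h
      · have h' := Fin.ext_iff.mp h.symm
        simp only [Fin.val_zero, Fin.coe_castSucc] at h'
        have hieq : i = ⟨0, by omega⟩ := Fin.ext h'
        rw [hieq] at he₀M
        exact h0 ((hQiff 0 (by omega)).mpr he₀M)
      · have h' := Fin.ext_iff.mp h
        simp only [Fin.val_zero, Fin.val_succ] at h'
        omega
end

section
/- Every brace on six or more vertices is 3-connected. -/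
open Multigraph

namespace Multigraph

variable (G : Multigraph)

lemma adj_symm' {p q : G.V} (h : G.Adj p q) : G.Adj q p := by
  obtain ⟨hne, e, he⟩ := h
  exact ⟨hne.symm, e, by rw [he, Sym2.eq_swap]⟩

lemma ends_ne {e : G.E} {p q : G.V} (h : G.ends e = s(p, q)) : p ≠ q := by
  intro hpq
  exact G.no_loops e (by rw [h, hpq]; simp)

/-- Reachability avoiding the vertex set `S`. -/
def Reach (S : Set G.V) : G.V → G.V → Prop :=
  Relation.ReflTransGen (fun p q => p ∉ S ∧ q ∉ S ∧ G.Adj p q)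

lemma reach_symm {S : Set G.V} {a b : G.V} (h : G.Reach S a b) : G.Reach S b a :=
  @Std.Symm.symm _ _ (@Relation.ReflTransGen.symmetric _ _
    ⟨fun _ _ hpq => ⟨hpq.2.1, hpq.1, G.adj_symm' hpq.2.2⟩⟩) _ _ h

lemma reach_notin {S : Set G.V} {a b : G.V} (h : G.Reach S a b) (ha : a ∉ S) : b ∉ S := by
  induction h with
  | refl => exact ha
  | tail _ hs _ => exact hs.2.1

lemma reach_step {S : Set G.V} {a p q : G.V} (ha : a ∉ S) (h : G.Reach S a p) {e : G.E}
    (he : G.ends e = s(p, q)) (hq : q ∉ S) : G.Reach S a q :=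
  h.tail ⟨G.reach_notin h ha, hq, G.ends_ne he, e, he⟩

lemma cut_nonempty (hconn : G.Connected) (X : Set G.V) {x y : G.V}
    (hx : x ∈ X) (hy : y ∉ X) : ∃ e, e ∈ G.cut X := by
  have h := hconn.2 x y
  revert hy
  induction h with
  | refl => exact fun hy => absurd hx hy
  | @tail p q hp hs ih =>
    intro hy
    by_cases hpX : p ∈ X
    · obtain ⟨hne, e, he⟩ := hs
      exact ⟨e, p, hpX, q, hy, he⟩
    · exact ih hpX

lemma deleteVerts_adj {S : Set G.V} {p q : G.V} (hp : p ∉ S) (hq : q ∉ S) (h : G.Adj p q) :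
    (G.deleteVerts S).Adj ⟨p, hp⟩ ⟨q, hq⟩ := by
  obtain ⟨hne, e, he⟩ := h
  have hmem : ∀ w ∈ G.ends e, w ∉ S := by
    intro w hw
    rw [he] at hw
    rcases Sym2.mem_iff.mp hw with rfl | rfl
    · exact hp
    · exact hq
  refine ⟨fun hc => hne (congrArg Subtype.val hc), ⟨e, hmem⟩, ?_⟩
  apply Sym2.map.injective Subtype.val_injective
  show ((G.ends e).attachWith hmem).map Subtype.val = _
  rw [Sym2.attachWith_map_subtypeVal, he]
  rfl

lemma reach_lift {S : Set G.V} {a b : G.V} (h : G.Reach S a b) (ha : a ∉ S) :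
    ∀ hb : b ∉ S, Relation.ReflTransGen (G.deleteVerts S).Adj ⟨a, ha⟩ ⟨b, hb⟩ := by
  induction h with
  | refl => exact fun _ => .refl
  | @tail p q hp hs ih =>
    exact fun hb => (ih hs.1).tail (G.deleteVerts_adj hs.1 hb hs.2.2)

open Classical in
/-- The key counting lemma: if every edge crossing `∂(X)` has its `X`-end
coloured `t`, then for every perfect matching `M`,
`|X ∩ c⁻¹(t)| = |X ∩ c⁻¹(!t)| + |M ∩ ∂(X)|`. -/
lemma count_lemma (c : G.V → Bool) (t : Bool)
    (hc : ∀ (e : G.E) (a b : G.V), G.ends e = s(a, b) → c a ≠ c b)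
    (X : Set G.V)
    (hX : ∀ (e : G.E) (p q : G.V), G.ends e = s(p, q) → p ∈ X → q ∉ X → c p = t)
    (M : Set G.E) (hM : G.IsPerfectMatching M) :
    Nat.card {x : G.V // x ∈ X ∧ c x = t}
      = Nat.card {x : G.V // x ∈ X ∧ c x = !t}
        + Nat.card {e : G.E // e ∈ M ∧ e ∈ G.cut X} := by
  have hM' : ∀ v : G.V, ∃ e, (e ∈ M ∧ G.Inc v e) ∧ ∀ y, (y ∈ M ∧ G.Inc v y) → y = e := hM
  choose m hm hu using hM'
  have hvin : ∀ v : G.V, v ∈ G.ends (m v) := fun v => (hm v).2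
  let w : G.V → G.V := fun v => Sym2.Mem.other' (hvin v)
  have hspec : ∀ v, G.ends (m v) = s(v, w v) := fun v => (Sym2.other_spec' (hvin v)).symm
  have hwne : ∀ v, w v ≠ v := fun v hEq => G.ends_ne (hspec v) hEq.symm
  have hwinc : ∀ v, G.Inc (w v) (m v) := by
    intro v
    show w v ∈ G.ends (m v)
    rw [hspec v]
    simp
  have hmw : ∀ v, m (w v) = m v := fun v => (hu (w v) (m v) ⟨(hm v).1, hwinc v⟩).symm
  have hww : ∀ v, w (w v) = v := by
    intro v
    have h1 : s(w v, w (w v)) = s(w v, v) := by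
      rw [← hspec (w v), hmw v, hspec v, Sym2.eq_swap]
    rcases Sym2.eq_iff.mp h1 with ⟨_, h⟩ | ⟨h, _⟩
    · exact h
    · exact absurd h (hwne v)
  have hcw : ∀ v, c (w v) = !(c v) := by
    intro v
    have h := hc (m v) v (w v) (hspec v)
    cases h1 : c v <;> cases h2 : c (w v) <;> simp_all
  have hcut : ∀ x : G.V, x ∈ X → w x ∉ X → m x ∈ G.cut X :=
    fun x hxX hw => ⟨x, hxX, w x, hw, hspec x⟩
  let f : {x : G.V // x ∈ X ∧ c x = t} →
      {x : G.V // x ∈ X ∧ c x = !t} ⊕ {e : G.E // e ∈ M ∧ e ∈ G.cut X} := fun x =>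
    if h : w x.1 ∈ X then Sum.inl ⟨w x.1, h, by rw [hcw x.1, x.2.2]⟩
    else Sum.inr ⟨m x.1, (hm x.1).1, hcut x.1 x.2.1 h⟩
  have hinj : Function.Injective f := by
    intro x y hxy
    by_cases hx : w x.1 ∈ X <;> by_cases hy : w y.1 ∈ X <;>
      simp only [f, dif_pos, dif_neg, hx, hy, dite_true, dite_false] at hxy <;>
      [skip; exact absurd hxy (by simp); exact absurd hxy (by simp); skip]
    · simp only [Sum.inl.injEq, Subtype.mk.injEq] at hxy
      have : x.1 = y.1 := by rw [← hww x.1, hxy, hww y.1]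
      exact Subtype.ext this
    · simp only [Sum.inr.injEq, Subtype.mk.injEq] at hxy
      have h1 : s(x.1, w x.1) = s(y.1, w y.1) := by rw [← hspec, ← hspec, hxy]
      rcases Sym2.eq_iff.mp h1 with ⟨h, _⟩ | ⟨h, _⟩
      · exact Subtype.ext h
      · exact absurd (h ▸ x.2.1) hy
  have hsurj : Function.Surjective f := by
    rintro (⟨y, hyX, hyc⟩ | ⟨e, heM, hecut⟩)
    · have hwyX : w y ∈ X := by
        by_contra hw
        have h := hX (m y) y (w y) (hspec y) hyX hw
        rw [h] at hyc
        cases t <;> simp at hyc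
      refine ⟨⟨w y, hwyX, by rw [hcw y, hyc]; cases t <;> rfl⟩, ?_⟩
      have hin : w (w y) ∈ X := by rw [hww y]; exact hyX
      simp only [f, dif_pos hin]
      exact congrArg Sum.inl (Subtype.ext (hww y))
    · obtain ⟨p, hpX, q, hqX, hpq⟩ := hecut
      have hqX' : q ∉ X := hqX
      have hpc : c p = t := hX e p q hpq hpX hqX'
      have hpinc : G.Inc p e := by
        show p ∈ G.ends e
        rw [hpq]
        simp
      have hep : e = m p := hu p e ⟨heM, hpinc⟩
      have hwp : w p = q := by
        have h1 : s(p, w p) = s(p, q) := by rw [← hspec p, ← hep, hpq]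
        rcases Sym2.eq_iff.mp h1 with ⟨_, h⟩ | ⟨h1', h2'⟩
        · exact h
        · rw [h2', h1']
      refine ⟨⟨p, hpX, hpc⟩, ?_⟩
      have hout : w p ∉ X := by rw [hwp]; exact hqX'
      simp only [f, dif_neg hout]
      exact congrArg Sum.inr (Subtype.ext hep.symm)
  calc Nat.card {x : G.V // x ∈ X ∧ c x = t}
      = Nat.card ({x : G.V // x ∈ X ∧ c x = !t} ⊕ {e : G.E // e ∈ M ∧ e ∈ G.cut X}) :=
        Nat.card_congr (Equiv.ofBijective f ⟨hinj, hsurj⟩)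
    _ = _ := Nat.card_sum

lemma three_edges {M : Set G.E} (hM : G.IsPerfectMatching M) {u v : G.V}
    {e1 e2 e3 : G.E} (h1 : e1 ∈ M) (h2 : e2 ∈ M) (h3 : e3 ∈ M)
    (h12 : e1 ≠ e2) (h13 : e1 ≠ e3) (h23 : e2 ≠ e3)
    (hi1 : G.Inc u e1 ∨ G.Inc v e1) (hi2 : G.Inc u e2 ∨ G.Inc v e2)
    (hi3 : G.Inc u e3 ∨ G.Inc v e3) : False := by
  obtain ⟨eu, -, hu⟩ := hM u
  obtain ⟨ev, -, hv⟩ := hM v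
  have Hu : ∀ ea eb, ea ∈ M → eb ∈ M → G.Inc u ea → G.Inc u eb → ea = eb := by
    intro ea eb ha hb hia hib
    rw [hu ea ⟨ha, hia⟩, hu eb ⟨hb, hib⟩]
  have Hv : ∀ ea eb, ea ∈ M → eb ∈ M → G.Inc v ea → G.Inc v eb → ea = eb := by
    intro ea eb ha hb hia hib
    rw [hv ea ⟨ha, hia⟩, hv eb ⟨hb, hib⟩]
  rcases hi1 with h | h <;> rcases hi2 with h' | h' <;> rcases hi3 with h'' | h''
  · exact h12 (Hu _ _ h1 h2 h h')
  · exact h12 (Hu _ _ h1 h2 h h')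
  · exact h13 (Hu _ _ h1 h3 h h'')
  · exact h23 (Hv _ _ h2 h3 h' h'')
  · exact h23 (Hu _ _ h2 h3 h' h'')
  · exact h13 (Hv _ _ h1 h3 h h'')
  · exact h12 (Hv _ _ h1 h2 h h')
  · exact h12 (Hv _ _ h1 h2 h h')

lemma card_union_singleton_eq (K : Set G.V) (c : G.V → Bool) (t : Bool) (s : G.V)
    (hs : s ∉ K) (hst : c s = t) :
    Nat.card {x : G.V // x ∈ K ∪ {s} ∧ c x = t}
      = Nat.card {x : G.V // x ∈ K ∧ c x = t} + 1 := by
  have hset : {x : G.V | x ∈ K ∪ {s} ∧ c x = t} = insert s {x : G.V | x ∈ K ∧ c x = t} := by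
    ext z
    simp only [Set.mem_union, Set.mem_singleton_iff, Set.mem_insert_iff, Set.mem_setOf_eq]
    constructor
    · rintro ⟨hz | rfl, hcz⟩
      · exact Or.inr ⟨hz, hcz⟩
      · exact Or.inl rfl
    · rintro (rfl | ⟨hz, hcz⟩)
      · exact ⟨Or.inr rfl, hst⟩
      · exact ⟨Or.inl hz, hcz⟩
  have h1 : Nat.card {x : G.V // x ∈ K ∪ {s} ∧ c x = t}
      = ({x : G.V | x ∈ K ∪ {s} ∧ c x = t}).ncard := rfl
  have h2 : Nat.card {x : G.V // x ∈ K ∧ c x = t}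
      = ({x : G.V | x ∈ K ∧ c x = t}).ncard := rfl
  rw [h1, h2, hset, Set.ncard_insert_of_notMem (fun h => hs h.1)]

lemma card_union_singleton_ne (K : Set G.V) (c : G.V → Bool) (t : Bool) (s : G.V)
    (hst : c s ≠ t) :
    Nat.card {x : G.V // x ∈ K ∪ {s} ∧ c x = t}
      = Nat.card {x : G.V // x ∈ K ∧ c x = t} := by
  have hset : {x : G.V | x ∈ K ∪ {s} ∧ c x = t} = {x : G.V | x ∈ K ∧ c x = t} := by
    ext z
    simp only [Set.mem_union, Set.mem_singleton_iff, Set.mem_setOf_eq]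
    constructor
    · rintro ⟨hz | rfl, hcz⟩
      · exact ⟨hz, hcz⟩
      · exact absurd hcz hst
    · rintro ⟨hz, hcz⟩
      exact ⟨Or.inl hz, hcz⟩
  have h1 : Nat.card {x : G.V // x ∈ K ∪ {s} ∧ c x = t}
      = ({x : G.V | x ∈ K ∪ {s} ∧ c x = t}).ncard := rfl
  have h2 : Nat.card {x : G.V // x ∈ K ∧ c x = t}
      = ({x : G.V | x ∈ K ∧ c x = t}).ncard := rfl
  rw [h1, h2, hset]

end Multigraph

/-- Every brace on six or more vertices is 3-connected. -/
theorem brace_three_connected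
    (G : Multigraph) (hG : G.IsBrace) (h6 : 6 ≤ Nat.card G.V) :
    G.ThreeConnected := by
  classical
  obtain ⟨hmc, hbip, htight⟩ := hG
  have hconn := hmc.2.1
  refine ⟨by omega, ?_⟩
  intro u v huv
  by_contra hcon
  set S : Set G.V := {u, v} with hSdef
  have huS : u ∈ S := by simp [hSdef]
  have hvS : v ∈ S := by simp [hSdef]
  have hSmem : ∀ z : G.V, z ∈ S → z = u ∨ z = v := by
    intro z hz
    simpa [hSdef] using hz
  obtain ⟨c, hc, hcu⟩ : ∃ c : G.V → Bool,
      (∀ (e : G.E) (a b : G.V), G.ends e = s(a, b) → c a ≠ c b) ∧ c u = true := by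
    obtain ⟨c0, hc0⟩ := hbip
    cases hcu0 : c0 u
    · exact ⟨fun z => !(c0 z), fun e a b he h => hc0 e a b he (Bool.not_inj h),
        by simp [hcu0]⟩
    · exact ⟨c0, hc0, hcu0⟩
  have hHne : Nonempty (G.deleteVerts S).V := by
    by_contra h
    have hall : ∀ z : G.V, z ∈ S := fun z => by
      by_contra hz
      exact h ⟨⟨z, hz⟩⟩
    have hsub : (Finset.univ : Finset G.V) ⊆ {u, v} := by
      intro z _
      rcases hSmem z (hall z) with rfl | rfl <;> simp
    have h2 : Fintype.card G.V ≤ 2 := by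
      calc Fintype.card G.V = (Finset.univ : Finset G.V).card := rfl
        _ ≤ ({u, v} : Finset G.V).card := Finset.card_le_card hsub
        _ ≤ 2 := (Finset.card_insert_le _ _).trans (by simp)
    rw [Nat.card_eq_fintype_card] at h6
    omega
  obtain ⟨x, y, hxy⟩ : ∃ x y : (G.deleteVerts S).V,
      ¬ Relation.ReflTransGen (G.deleteVerts S).Adj x y := by
    by_contra h
    push_neg at h
    exact hcon ⟨hHne, h⟩
  obtain ⟨a, ha⟩ := x
  obtain ⟨b, hb⟩ := y
  have hRab : ¬ G.Reach S a b := fun h => hxy (G.reach_lift h ha hb)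
  have hKsub : ∀ r : G.V, r ∉ S → ∀ z, G.Reach S r z → z ∉ S :=
    fun r hr z hz => G.reach_notin hz hr
  have hcutStr : ∀ r : G.V, r ∉ S → ∀ e ∈ G.cut {z | G.Reach S r z},
      ∃ p q, G.Reach S r p ∧ q ∈ S ∧ G.ends e = s(p, q) := by
    intro r hr e he
    obtain ⟨p, hp, q, hq, hpq⟩ := he
    refine ⟨p, q, hp, ?_, hpq⟩
    by_contra hqS
    exact hq (G.reach_step hr hp hpq hqS)
  have hcutInc : ∀ r : G.V, r ∉ S → ∀ e ∈ G.cut {z | G.Reach S r z},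
      G.Inc u e ∨ G.Inc v e := by
    intro r hr e he
    obtain ⟨p, q, hp, hqS, hpq⟩ := hcutStr r hr e he
    have hqinc : G.Inc q e := by
      show q ∈ G.ends e
      rw [hpq]
      simp
    rcases hSmem q hqS with rfl | rfl
    · exact Or.inl hqinc
    · exact Or.inr hqinc
  have hdisj : ∀ r r' : G.V, r ∉ S → r' ∉ S → ¬ G.Reach S r r' →
      ∀ e, e ∈ G.cut {z | G.Reach S r z} → e ∈ G.cut {z | G.Reach S r' z} → False := by
    intro r r' hr hr' hrr' e he he'
    obtain ⟨p, q, hp, hqS, hpq⟩ := hcutStr r hr e he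
    obtain ⟨p', q', hp', hqS', hpq'⟩ := hcutStr r' hr' e he'
    rcases Sym2.eq_iff.mp (hpq.symm.trans hpq') with ⟨h1, h2⟩ | ⟨h1, h2⟩
    · exact hrr' (hp.trans (G.reach_symm (by rw [← h1] at hp'; exact hp')))
    · exact (hKsub r hr p hp) (by rw [h1]; exact hqS')
  by_cases hcv : c v = true
  · -- u and v in the same colour class
    have compEq : ∀ r : G.V, r ∉ S → ∀ M, G.IsPerfectMatching M →
        Nat.card {x : G.V // x ∈ {z | G.Reach S r z} ∧ c x = false}
          = Nat.card {x : G.V // x ∈ {z | G.Reach S r z} ∧ c x = true}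
            + Nat.card {e : G.E // e ∈ M ∧ e ∈ G.cut {z | G.Reach S r z}} := by
      intro r hr M hM
      have hXc : ∀ (e : G.E) (p q : G.V), G.ends e = s(p, q) →
          p ∈ {z | G.Reach S r z} → q ∉ {z | G.Reach S r z} → c p = false := by
        intro e p q he hp hq
        have hqS : q ∈ S := by
          by_contra hqS
          exact hq (G.reach_step hr hp he hqS)
        have hcq : c q = true := by
          rcases hSmem q hqS with rfl | rfl
          · exact hcu
          · exact hcv
        have hne := hc e p q he
        rw [hcq] at hne
        cases h : c p
        · rfl
        · exact absurd h hne
      exact G.count_lemma c false hc _ hXc M hM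
    have compGe : ∀ r : G.V, r ∉ S → ∀ M, G.IsPerfectMatching M →
        1 ≤ Nat.card {e : G.E // e ∈ M ∧ e ∈ G.cut {z | G.Reach S r z}} := by
      intro r hr M hM
      have hrK : r ∈ {z | G.Reach S r z} := Relation.ReflTransGen.refl
      have huK : u ∉ {z | G.Reach S r z} := fun h => (hKsub r hr u h) huS
      obtain ⟨e0, he0⟩ := G.cut_nonempty hconn _ hrK huK
      obtain ⟨M0, hM0, he0M⟩ := hmc.2.2 e0
      have h1 := compEq r hr M hM
      have h2 := compEq r hr M0 hM0
      haveI : Nonempty {e : G.E // e ∈ M0 ∧ e ∈ G.cut {z | G.Reach S r z}} :=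
        ⟨⟨e0, he0M, he0⟩⟩
      have h3 : 0 < Nat.card {e : G.E // e ∈ M0 ∧ e ∈ G.cut {z | G.Reach S r z}} :=
        Nat.card_pos
      omega
    have htcK : ∀ r r' : G.V, r ∉ S → r' ∉ S → ¬ G.Reach S r r' →
        G.IsTightCut {z | G.Reach S r z} := by
      intro r r' hr hr' hrr'
      refine ⟨⟨r, Relation.ReflTransGen.refl⟩, ⟨u, fun h => (hKsub r hr u h) huS⟩, ?_⟩
      intro M hM
      obtain ⟨⟨f1, hf1M, hf1c⟩⟩ := (Nat.card_pos_iff.mp (compGe r hr M hM)).1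
      obtain ⟨⟨f2, hf2M, hf2c⟩⟩ := (Nat.card_pos_iff.mp (compGe r' hr' M hM)).1
      refine ⟨f1, ⟨hf1M, hf1c⟩, ?_⟩
      rintro e' ⟨he'M, he'c⟩
      by_contra hne
      have h12 : f1 ≠ f2 := fun h => hdisj r r' hr hr' hrr' f1 hf1c (by rw [h]; exact hf2c)
      have he2 : e' ≠ f2 := fun h => hdisj r r' hr hr' hrr' e' he'c (by rw [h]; exact hf2c)
      exact G.three_edges hM he'M hf1M hf2M hne he2 h12
        (hcutInc r hr e' he'c) (hcutInc r hr f1 hf1c) (hcutInc r' hr' f2 hf2c)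
    have hRba : ¬ G.Reach S b a := fun h => hRab (G.reach_symm h)
    have hK1 : {z | G.Reach S a z} = {a} := by
      rcases htight _ (htcK a b ha hb hRab) with ⟨z, hz⟩ | ⟨z, hz⟩
      · have haz : a = z := by
          have h := (Relation.ReflTransGen.refl : G.Reach S a a)
          have h2 : a ∈ {z | G.Reach S a z} := h
          rw [hz] at h2
          exact h2
        rw [hz, haz]
      · exfalso
        have hu' : u ∈ {z | G.Reach S a z}ᶜ := fun h => (hKsub a ha u h) huS
        have hv' : v ∈ {z | G.Reach S a z}ᶜ := fun h => (hKsub a ha v h) hvS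
        rw [hz] at hu' hv'
        exact huv ((Set.mem_singleton_iff.mp hu').trans (Set.mem_singleton_iff.mp hv').symm)
    have hK2 : {z | G.Reach S b z} = {b} := by
      rcases htight _ (htcK b a hb ha hRba) with ⟨z, hz⟩ | ⟨z, hz⟩
      · have haz : b = z := by
          have h2 : b ∈ {z | G.Reach S b z} := Relation.ReflTransGen.refl
          rw [hz] at h2
          exact h2
        rw [hz, haz]
      · exfalso
        have hu' : u ∈ {z | G.Reach S b z}ᶜ := fun h => (hKsub b hb u h) huS
        have hv' : v ∈ {z | G.Reach S b z}ᶜ := fun h => (hKsub b hb v h) hvS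
        rw [hz] at hu' hv'
        exact huv ((Set.mem_singleton_iff.mp hu').trans (Set.mem_singleton_iff.mp hv').symm)
    obtain ⟨w0, hw0u, hw0v, hw0a, hw0b⟩ :
        ∃ w0 : G.V, w0 ≠ u ∧ w0 ≠ v ∧ w0 ≠ a ∧ w0 ≠ b := by
      by_contra h
      push_neg at h
      have hsub : (Finset.univ : Finset G.V) ⊆ {u, v, a, b} := by
        intro z _
        by_cases h1 : z = u
        · simp [h1]
        by_cases h2 : z = v
        · simp [h2]
        by_cases h3 : z = a
        · simp [h3]
        have h4 := h z h1 h2 h3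
        simp [h4]
      have hc4 : Fintype.card G.V ≤ 4 := by
        calc Fintype.card G.V = (Finset.univ : Finset G.V).card := rfl
          _ ≤ ({u, v, a, b} : Finset G.V).card := Finset.card_le_card hsub
          _ ≤ 4 := by
              have h1 := Finset.card_insert_le u ({v, a, b} : Finset G.V)
              have h2 := Finset.card_insert_le v ({a, b} : Finset G.V)
              have h3 := Finset.card_insert_le a ({b} : Finset G.V)
              have h4 : ({b} : Finset G.V).card = 1 := Finset.card_singleton b
              omega
      rw [Nat.card_eq_fintype_card] at h6
      omega
    have hw0S : w0 ∉ S := by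
      intro h
      rcases hSmem w0 h with rfl | rfl
      · exact hw0u rfl
      · exact hw0v rfl
    have hw0Ra : ¬ G.Reach S a w0 := by
      intro h
      have h2 : w0 ∈ {z | G.Reach S a z} := h
      rw [hK1] at h2
      exact hw0a (Set.mem_singleton_iff.mp h2)
    have hw0Rb : ¬ G.Reach S b w0 := by
      intro h
      have h2 : w0 ∈ {z | G.Reach S b z} := h
      rw [hK2] at h2
      exact hw0b (Set.mem_singleton_iff.mp h2)
    obtain ⟨e0, he0⟩ := G.cut_nonempty hconn {z | G.Reach S a z}
      (show a ∈ {z | G.Reach S a z} from Relation.ReflTransGen.refl)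
      (fun h => (hKsub a ha u h) huS)
    obtain ⟨Ms, hMs, he0Ms⟩ := hmc.2.2 e0
    obtain ⟨⟨g1, hg1M, hg1c⟩⟩ := (Nat.card_pos_iff.mp (compGe a ha Ms hMs)).1
    obtain ⟨⟨g2, hg2M, hg2c⟩⟩ := (Nat.card_pos_iff.mp (compGe b hb Ms hMs)).1
    obtain ⟨⟨g3, hg3M, hg3c⟩⟩ := (Nat.card_pos_iff.mp (compGe w0 hw0S Ms hMs)).1
    have n12 : g1 ≠ g2 := fun h => hdisj a b ha hb hRab g1 hg1c (by rw [h]; exact hg2c)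
    have n13 : g1 ≠ g3 := fun h => hdisj a w0 ha hw0S hw0Ra g1 hg1c (by rw [h]; exact hg3c)
    have n23 : g2 ≠ g3 := fun h => hdisj b w0 hb hw0S hw0Rb g2 hg2c (by rw [h]; exact hg3c)
    exact G.three_edges hMs hg1M hg2M hg3M n12 n13 n23
      (hcutInc a ha g1 hg1c) (hcutInc b hb g2 hg2c) (hcutInc w0 hw0S g3 hg3c)
  · -- u and v in different colour classes
    have hcv' : c v = false := by simpa using hcv
    set K : Set G.V := {z | G.Reach S a z} with hKdef
    have haK : a ∈ K := Relation.ReflTransGen.refl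
    have huK : u ∉ K := fun h => (hKsub a ha u h) huS
    have hvK : v ∉ K := fun h => (hKsub a ha v h) hvS
    have hbK : b ∉ K := hRab
    have hau : a ≠ u := fun h => ha (by rw [h]; exact huS)
    have hbu : b ≠ u := fun h => hb (by rw [h]; exact huS)
    have hbv : b ≠ v := fun h => hb (by rw [h]; exact hvS)
    have hXc : ∀ (e : G.E) (p q : G.V), G.ends e = s(p, q) →
        p ∈ K ∪ {u} → q ∉ K ∪ {u} → c p = true := by
      intro e p q he hp hq
      rcases (Set.mem_union _ _ _).mp hp with hpK | hpu
      · have hqS : q ∈ S := by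
          by_contra hqS
          exact hq ((Set.mem_union _ _ _).mpr (Or.inl (G.reach_step ha hpK he hqS)))
        have hqv : q = v := by
          rcases hSmem q hqS with rfl | rfl
          · exact absurd ((Set.mem_union _ _ _).mpr (Or.inr rfl)) hq
          · rfl
        have hne := hc e p q he
        rw [hqv, hcv'] at hne
        cases h : c p
        · exact absurd h hne
        · rfl
      · rw [Set.mem_singleton_iff.mp hpu]
        exact hcu
    have hX'c : ∀ (e : G.E) (p q : G.V), G.ends e = s(p, q) →
        p ∈ K ∪ {v} → q ∉ K ∪ {v} → c p = false := by
      intro e p q he hp hq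
      rcases (Set.mem_union _ _ _).mp hp with hpK | hpv
      · have hqS : q ∈ S := by
          by_contra hqS
          exact hq ((Set.mem_union _ _ _).mpr (Or.inl (G.reach_step ha hpK he hqS)))
        have hqu : q = u := by
          rcases hSmem q hqS with rfl | rfl
          · rfl
          · exact absurd ((Set.mem_union _ _ _).mpr (Or.inr rfl)) hq
        have hne := hc e p q he
        rw [hqu, hcu] at hne
        cases h : c p
        · rfl
        · exact absurd h hne
      · rw [Set.mem_singleton_iff.mp hpv]
        exact hcv'
    have eqX : ∀ M, G.IsPerfectMatching M →
        Nat.card {x : G.V // x ∈ K ∧ c x = true} + 1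
          = Nat.card {x : G.V // x ∈ K ∧ c x = false}
            + Nat.card {e : G.E // e ∈ M ∧ e ∈ G.cut (K ∪ {u})} := by
      intro M hM
      have h := G.count_lemma c true hc (K ∪ {u}) hXc M hM
      rw [G.card_union_singleton_eq K c true u huK hcu] at h
      rw [show Nat.card {x : G.V // x ∈ K ∪ {u} ∧ c x = !true}
          = Nat.card {x : G.V // x ∈ K ∪ {u} ∧ c x = false} from rfl] at h
      rw [G.card_union_singleton_ne K c false u (by rw [hcu]; simp)] at h
      exact h
    have eqX' : ∀ M, G.IsPerfectMatching M →
        Nat.card {x : G.V // x ∈ K ∧ c x = false} + 1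
          = Nat.card {x : G.V // x ∈ K ∧ c x = true}
            + Nat.card {e : G.E // e ∈ M ∧ e ∈ G.cut (K ∪ {v})} := by
      intro M hM
      have h := G.count_lemma c false hc (K ∪ {v}) hX'c M hM
      rw [G.card_union_singleton_eq K c false v hvK hcv'] at h
      rw [show Nat.card {x : G.V // x ∈ K ∪ {v} ∧ c x = !false}
          = Nat.card {x : G.V // x ∈ K ∪ {v} ∧ c x = true} from rfl] at h
      rw [G.card_union_singleton_ne K c true v (by rw [hcv']; simp)] at h
      exact h
    have haX : a ∈ K ∪ {u} := (Set.mem_union _ _ _).mpr (Or.inl haK)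
    have hbX : b ∉ K ∪ {u} := by
      intro h
      rcases (Set.mem_union _ _ _).mp h with h' | h'
      · exact hbK h'
      · exact hbu (Set.mem_singleton_iff.mp h')
    have haX' : a ∈ K ∪ {v} := (Set.mem_union _ _ _).mpr (Or.inl haK)
    have hbX' : b ∉ K ∪ {v} := by
      intro h
      rcases (Set.mem_union _ _ _).mp h with h' | h'
      · exact hbK h'
      · exact hbv (Set.mem_singleton_iff.mp h')
    obtain ⟨e1, he1⟩ := G.cut_nonempty hconn (K ∪ {u}) haX hbX
    obtain ⟨M1, hM1, he1M⟩ := hmc.2.2 e1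
    obtain ⟨e2, he2⟩ := G.cut_nonempty hconn (K ∪ {v}) haX' hbX'
    obtain ⟨M2, hM2, he2M⟩ := hmc.2.2 e2
    haveI hne1 : Nonempty {e : G.E // e ∈ M1 ∧ e ∈ G.cut (K ∪ {u})} := ⟨⟨e1, he1M, he1⟩⟩
    have hp1 : 0 < Nat.card {e : G.E // e ∈ M1 ∧ e ∈ G.cut (K ∪ {u})} := Nat.card_pos
    haveI hne2 : Nonempty {e : G.E // e ∈ M2 ∧ e ∈ G.cut (K ∪ {v})} := ⟨⟨e2, he2M, he2⟩⟩
    have hp2 : 0 < Nat.card {e : G.E // e ∈ M2 ∧ e ∈ G.cut (K ∪ {v})} := Nat.card_pos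
    have htc : G.IsTightCut (K ∪ {u}) := by
      refine ⟨⟨a, haX⟩, ⟨b, hbX⟩, ?_⟩
      intro M hM
      have E1 := eqX M hM
      have E2 := eqX' M hM
      have E3 := eqX M1 hM1
      have E4 := eqX' M2 hM2
      have hone : Nat.card {e : G.E // e ∈ M ∧ e ∈ G.cut (K ∪ {u})} = 1 := by omega
      have hone' : ({e : G.E | e ∈ M ∧ e ∈ G.cut (K ∪ {u})}).ncard = 1 := hone
      rw [Set.ncard_eq_one] at hone'
      obtain ⟨e0, he0⟩ := hone'
      refine ⟨e0, ?_, ?_⟩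
      · have h : e0 ∈ {e : G.E | e ∈ M ∧ e ∈ G.cut (K ∪ {u})} := by rw [he0]; rfl
        exact h
      · intro y hy
        have h : y ∈ {e : G.E | e ∈ M ∧ e ∈ G.cut (K ∪ {u})} := hy
        rw [he0] at h
        exact h
    rcases htight _ htc with ⟨z, hz⟩ | ⟨z, hz⟩
    · have h1 : a = z := by
        have h := haX
        rw [hz] at h
        exact Set.mem_singleton_iff.mp h
      have h2 : u = z := by
        have h : u ∈ K ∪ {u} := (Set.mem_union _ _ _).mpr (Or.inr rfl)
        rw [hz] at h
        exact Set.mem_singleton_iff.mp h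
      exact hau (h1.trans h2.symm)
    · have h1 : b = z := by
        have h : b ∈ (K ∪ {u})ᶜ := hbX
        rw [hz] at h
        exact Set.mem_singleton_iff.mp h
      have h2 : v = z := by
        have hvX : v ∉ K ∪ {u} := by
          intro h
          rcases (Set.mem_union _ _ _).mp h with h' | h'
          · exact hvK h'
          · exact huv (Set.mem_singleton_iff.mp h').symm
        have h : v ∈ (K ∪ {u})ᶜ := hvX
        rw [hz] at h
        exact Set.mem_singleton_iff.mp h
      exact hbv (h1.trans h2.symm)
end
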